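/- arXiv:2310.02809 — 8 statements merged into one kernel-verified Lean document; each statement's English description precedes it below -/
import Mathlib

section
/- Let E be a compact metric space and F ⊆ E a Borel set. Let (P_t)_{t ≥ 0} be a family of Markov kernels on E satisfying P_0 = identity kernel and the semigroup property P_{t+s} = P_t ∘ₖ P_s for all s, t ≥ 0, such that each P_t is Feller (for every bounded continuous f : E → ℝ, the map x ↦ ∫ f d(P_t x) is continuous) and such that the semigroup is weakly continuous in time (for every bounded continuous f : E → ℝ and every x ∈ E, the map t ↦ ∫ f d(P_t x) is continuous). Assume that for every s ∈ (0,1] there exists a unique probability measure π_s on E with π_s(E \ F) = 0 that is invariant for the kernel P_s. Then there exists a unique probability measure π on E with π(E \ F) = 0 that is invariant for P_t for every t ≥ 0, and moreover π = π_1. -/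
open MeasureTheory ProbabilityTheory Filter
open scoped ENNReal NNReal Topology

lemma continuous_integrable_of_compact
    {E : Type*} [MeasurableSpace E] [MetricSpace E] [CompactSpace E] [BorelSpace E]
    (μ : Measure E) [IsFiniteMeasure μ] {g : E → ℝ} (hg : Continuous g) :
    Integrable g μ :=
  hg.integrable_of_hasCompactSupport (isClosed_tsupport g).isCompact

/-- Let `E` be a compact metric space and `F ⊆ E` a Borel set. Let
`(P t)_{t ≥ 0}` be a Feller Markov semigroup on `E` that is weakly continuous in time.
If for every `s ∈ (0,1]` there is a unique probability measure `π_s` supported in `F`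
invariant for the kernel `P s`, then there is a unique probability measure `π` supported
in `F` invariant for every `P t`, `t ≥ 0`; moreover `π` coincides with `π_1` (i.e. with any
probability measure supported in `F` invariant for `P 1`). -/
theorem feller_semigroup_unique_invariant
    {E : Type*} [MeasurableSpace E] [MetricSpace E] [CompactSpace E] [BorelSpace E]
    (F : Set E) (hF : MeasurableSet F)
    (P : ℝ → Kernel E E)
    (hMarkov : ∀ t : ℝ, 0 ≤ t → IsMarkovKernel (P t))
    (hId : P 0 = Kernel.id)
    (hSemi : ∀ s t : ℝ, 0 ≤ s → 0 ≤ t → P (t + s) = (P t).comp (P s))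
    (hFeller : ∀ t : ℝ, 0 ≤ t → ∀ f : E → ℝ, Continuous f →
      Continuous fun x => ∫ y, f y ∂(P t x))
    (hWeakTimeCont : ∀ f : E → ℝ, Continuous f → ∀ x : E,
      ContinuousOn (fun t => ∫ y, f y ∂(P t x)) (Set.Ici (0 : ℝ)))
    (hUnique : ∀ s ∈ Set.Ioc (0 : ℝ) 1,
      ∃! π : Measure E, IsProbabilityMeasure π ∧ π Fᶜ = 0 ∧
        π.bind (fun x => P s x) = π) :
    ∃ π : Measure E, IsProbabilityMeasure π ∧ π Fᶜ = 0 ∧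
      (∀ t : ℝ, 0 ≤ t → π.bind (fun x => P t x) = π) ∧
      (∀ π' : Measure E, IsProbabilityMeasure π' → π' Fᶜ = 0 →
        (∀ t : ℝ, 0 ≤ t → π'.bind (fun x => P t x) = π') → π' = π) ∧
      (∀ π₁ : Measure E, IsProbabilityMeasure π₁ → π₁ Fᶜ = 0 →
        π₁.bind (fun x => P 1 x) = π₁ → π = π₁) := by
  obtain ⟨π, ⟨hπp, hπF, hπ1⟩, hπuniq⟩ := hUnique 1 ⟨one_pos, le_refl 1⟩
  haveI := hπp
  -- invariance is closed under addition of times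
  have hadd : ∀ (μ : Measure E) (s t : ℝ), 0 ≤ s → 0 ≤ t →
      μ.bind (fun x => P s x) = μ → μ.bind (fun x => P t x) = μ →
      μ.bind (fun x => P (t + s) x) = μ := by
    intro μ s t hs ht hμs hμt
    rw [hSemi s t hs ht]
    calc μ.bind (fun x => ((P t).comp (P s)) x)
        = μ.bind (fun x => ((P s) x).bind (fun y => P t y)) := by
          simp_rw [Kernel.comp_apply]
      _ = (μ.bind (fun x => P s x)).bind (fun y => P t y) :=
          (Measure.bind_bind (P s).measurable.aemeasurable (P t).measurable.aemeasurable).symm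
      _ = μ := by rw [hμs, hμt]
  -- invariance iterates
  have hiter : ∀ (μ : Measure E) (s : ℝ), 0 ≤ s → μ.bind (fun x => P s x) = μ →
      ∀ n : ℕ, μ.bind (fun x => P ((n : ℝ) * s) x) = μ := by
    intro μ s hs hμ n
    induction n with
    | zero =>
        simp only [Nat.cast_zero, zero_mul, hId, Kernel.id_apply]
        exact Measure.bind_dirac
    | succ n ih =>
        have hcast : ((n + 1 : ℕ) : ℝ) * s = (n : ℝ) * s + s := by push_cast; ring
        rw [hcast]
        exact hadd μ s ((n : ℝ) * s) hs (by positivity) hμ ih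
  -- π is invariant for P (1/n)
  have hinv_n : ∀ n : ℕ, 0 < n → π.bind (fun x => P (1 / (n : ℝ)) x) = π := by
    intro n hn
    have hnR : (0 : ℝ) < n := by exact_mod_cast hn
    have hmem : (1 / (n : ℝ)) ∈ Set.Ioc (0 : ℝ) 1 := by
      constructor
      · positivity
      · rw [div_le_one hnR]; exact_mod_cast hn
    obtain ⟨σ, ⟨hσp, hσF, hσinv⟩, -⟩ := hUnique _ hmem
    have h1 : σ.bind (fun x => P 1 x) = σ := by
      have := hiter σ (1 / (n : ℝ)) (le_of_lt hmem.1) hσinv n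
      rwa [mul_one_div, div_self (ne_of_gt hnR)] at this
    have hσπ : σ = π := hπuniq σ ⟨hσp, hσF, h1⟩
    rw [← hσπ]; exact hσinv
  -- π is invariant for nonnegative rationals
  have hinv_q : ∀ q : ℚ, 0 ≤ q → π.bind (fun x => P (q : ℝ) x) = π := by
    intro q hq
    have hden : 0 < (q.den : ℝ) := by exact_mod_cast q.pos
    have hqcast : (q : ℝ) = (q.num.toNat : ℝ) * (1 / (q.den : ℝ)) := by
      rw [mul_one_div]
      rw [Rat.cast_def]
      congr 1
      exact_mod_cast (Int.toNat_of_nonneg (Rat.num_nonneg.mpr hq)).symm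
    rw [hqcast]
    exact hiter π (1 / (q.den : ℝ)) (by positivity) (hinv_n q.den q.pos) q.num.toNat
  -- π is invariant for all t ≥ 0
  have hinv : ∀ t : ℝ, 0 ≤ t → π.bind (fun x => P t x) = π := by
    intro t ht
    haveI hPt := hMarkov t ht
    have hbp : IsProbabilityMeasure (π.bind (fun x => P t x)) := by
      constructor
      rw [Measure.bind_apply MeasurableSet.univ (P t).measurable.aemeasurable]
      simp
    haveI := hbp
    apply ext_of_forall_lintegral_eq_of_IsFiniteMeasure
    intro f
    have hfm : Measurable (fun y => (f y : ℝ≥0∞)) :=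
      measurable_coe_nnreal_ennreal.comp f.continuous.measurable
    -- the real-valued version
    set g : E → ℝ := fun y => (f y : ℝ) with hg_def
    have hg : Continuous g := NNReal.continuous_coe.comp f.continuous
    have hg0 : ∀ y, 0 ≤ g y := fun y => (f y).coe_nonneg
    obtain ⟨C, hC⟩ : ∃ C : ℝ, ∀ y, g y ≤ C := by
      obtain ⟨C, hC⟩ := (isCompact_range hg).bddAbove
      exact ⟨C, fun y => hC ⟨y, rfl⟩⟩
    set h : ℝ → E → ℝ := fun s x => ∫ y, g y ∂(P s x) with hh_def
    have hbound : ∀ s : ℝ, 0 ≤ s → ∀ x, h s x ∈ Set.Icc 0 C := by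
      intro s hs x
      haveI := hMarkov s hs
      refine ⟨integral_nonneg hg0, ?_⟩
      calc h s x ≤ ∫ _, C ∂(P s x) :=
            integral_mono (continuous_integrable_of_compact _ hg) (integrable_const C)
              (fun y => hC y)
        _ = C := by simp
    have hlin : ∀ s : ℝ, 0 ≤ s → ∀ x, ∫⁻ y, (f y : ℝ≥0∞) ∂(P s x) = ENNReal.ofReal (h s x) := by
      intro s hs x
      haveI := hMarkov s hs
      rw [lintegral_coe_eq_integral f (continuous_integrable_of_compact _ hg)]
    -- a rational sequence decreasing to t
    have hseq : ∀ k : ℕ, ∃ q : ℚ, t < (q : ℝ) ∧ (q : ℝ) < t + 1 / (k + 1) := by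
      intro k
      exact exists_rat_btwn (lt_add_of_pos_right t (by positivity))
    choose q hq1 hq2 using hseq
    have hq0 : ∀ k, (0 : ℝ) ≤ (q k : ℝ) := fun k => le_of_lt (lt_of_le_of_lt ht (hq1 k))
    have hq0' : ∀ k, (0 : ℚ) ≤ q k := fun k => by exact_mod_cast hq0 k
    have htend : Tendsto (fun k : ℕ => ((q k : ℝ))) atTop (𝓝 t) := by
      have hupper : Tendsto (fun k : ℕ => t + 1 / ((k : ℝ) + 1)) atTop (𝓝 t) := by
        have h0 : Tendsto (fun k : ℕ => 1 / ((k : ℝ) + 1)) atTop (𝓝 (0 : ℝ)) :=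
          tendsto_one_div_add_atTop_nhds_zero_nat
        have := (tendsto_const_nhds : Tendsto (fun _ : ℕ => t) atTop (𝓝 t)).add h0
        simpa using this
      exact tendsto_of_tendsto_of_tendsto_of_le_of_le tendsto_const_nhds hupper
        (fun k => (hq1 k).le) (fun k => (hq2 k).le)
    -- pointwise convergence of h
    have hpt : ∀ x, Tendsto (fun k => h (q k) x) atTop (𝓝 (h t x)) := by
      intro x
      have hc : Tendsto (fun s => h s x) (nhdsWithin t (Set.Ici (0 : ℝ))) (𝓝 (h t x)) :=
        (hWeakTimeCont g hg x t ht).tendsto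
      exact hc.comp (tendsto_nhdsWithin_of_tendsto_nhds_of_eventually_within _ htend
        (Eventually.of_forall hq0))
    -- dominated convergence in ℝ≥0∞
    have hFm : ∀ s : ℝ, Measurable (fun x => ∫⁻ y, (f y : ℝ≥0∞) ∂(P s x)) :=
      fun s => (Measure.measurable_lintegral hfm).comp (P s).measurable
    have hDCT : Tendsto (fun k => ∫⁻ x, ∫⁻ y, (f y : ℝ≥0∞) ∂(P (q k) x) ∂π) atTop
        (𝓝 (∫⁻ x, ∫⁻ y, (f y : ℝ≥0∞) ∂(P t x) ∂π)) := by
      apply tendsto_lintegral_of_dominated_convergence (fun _ => ENNReal.ofReal C)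
        (fun k => hFm (q k))
      · intro k
        refine Eventually.of_forall fun x => ?_
        exact le_of_eq_of_le (hlin (q k) (hq0 k) x)
          (ENNReal.ofReal_le_ofReal (hbound (q k) (hq0 k) x).2)
      · simp [lintegral_const]
      · refine Eventually.of_forall fun x => ?_
        have : Tendsto (fun k => ENNReal.ofReal (h (q k) x)) atTop
            (𝓝 (ENNReal.ofReal (h t x))) :=
          (ENNReal.continuous_ofReal.tendsto _).comp (hpt x)
        convert this using 2 with k
        · exact hlin (q k) (hq0 k) x
        · exact hlin t ht x
    -- each term of the sequence equals ∫⁻ f dπ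
    have hval : ∀ k, ∫⁻ x, ∫⁻ y, (f y : ℝ≥0∞) ∂(P (q k) x) ∂π = ∫⁻ y, (f y : ℝ≥0∞) ∂π := by
      intro k
      rw [← Measure.lintegral_bind (P (q k)).measurable.aemeasurable hfm.aemeasurable, hinv_q (q k) (hq0' k)]
    rw [Measure.lintegral_bind (P t).measurable.aemeasurable hfm.aemeasurable]
    have : Tendsto (fun _ : ℕ => ∫⁻ y, (f y : ℝ≥0∞) ∂π) atTop
        (𝓝 (∫⁻ x, ∫⁻ y, (f y : ℝ≥0∞) ∂(P t x) ∂π)) := by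
      convert hDCT using 2 with k
      exact (hval k).symm
    exact tendsto_nhds_unique this tendsto_const_nhds
  refine ⟨π, hπp, hπF, hinv, ?_, ?_⟩
  · intro π' h1 h2 h3
    exact hπuniq π' ⟨h1, h2, h3 1 zero_le_one⟩
  · intro π₁ h1 h2 h3
    exact (hπuniq π₁ ⟨h1, h2, h3⟩).symm
end

section
/- Let d ≥ 2, σ > 0, and let A be a d×d real matrix satisfying conditions [C1] and [C2] with parameter σ. Then there exists δ > 0 such that for every skew-symmetric d×d real matrix E with ‖E‖ < δ (operator norm), the matrix A + E satisfies condition [C2] with parameter σ, i.e. there exist a vector α' ∈ ℝ^d with strictly positive entries summing to 1 and a constant c' ∈ ℝ such that ∑_j ((A+E)_{ij} − σ²/2) α'_j = c' for every i. -/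
namespace C2AuxNS

open Matrix

variable {d : ℕ}

noncomputable def Rm (σ : ℝ) (X : Matrix (Fin d) (Fin d) ℝ) : Matrix (Fin d) (Fin d) ℝ :=
  Matrix.of fun i j => (if i = j then σ ^ 2 / 2 else 0) - (X i j - X j i) / 2

lemma Rm_apply (σ : ℝ) (X : Matrix (Fin d) (Fin d) ℝ) (i j : Fin d) :
    Rm σ X i j = (if i = j then σ ^ 2 / 2 else 0) - (X i j - X j i) / 2 := rfl

lemma quad (σ : ℝ) (X : Matrix (Fin d) (Fin d) ℝ) (x : Fin d → ℝ) :
    x ⬝ᵥ (Rm σ X *ᵥ x) = σ ^ 2 / 2 * (x ⬝ᵥ x) := by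
  have hs : (∑ i, ∑ j, x i * (X j i * x j) / 2) = ∑ i, ∑ j, x i * (X i j * x j) / 2 := by
    rw [Finset.sum_comm]
    exact Finset.sum_congr rfl fun i _ => Finset.sum_congr rfl fun j _ => by ring
  have expand : ∀ i j : Fin d,
      x i * (((if i = j then σ ^ 2 / 2 else 0) - (X i j - X j i) / 2) * x j)
        = (if i = j then σ ^ 2 / 2 * (x i * x j) else 0)
          - x i * (X i j * x j) / 2 + x i * (X j i * x j) / 2 := by
    intro i j
    rcases eq_or_ne i j with rfl | h
    · simp; ring
    · simp [h]; ring
  simp only [dotProduct, Matrix.mulVec, Rm, Matrix.of_apply, Finset.mul_sum, expand,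
    Finset.sum_add_distrib, Finset.sum_sub_distrib, Finset.sum_ite_eq, Finset.mem_univ,
    if_true]
  rw [hs]
  ring

end C2AuxNS

namespace C2AuxNS
open Matrix
variable {d : ℕ}

lemma sq_sum_pos {x : Fin d → ℝ} (hx : x ≠ 0) : 0 < x ⬝ᵥ x := by
  rcases Function.ne_iff.1 hx with ⟨i, hi⟩
  exact Finset.sum_pos' (fun j _ => mul_self_nonneg (x j))
    ⟨i, Finset.mem_univ i, mul_self_pos.mpr hi⟩

lemma Rm_det_ne {σ : ℝ} (hσ : 0 < σ) (X : Matrix (Fin d) (Fin d) ℝ) :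
    (Rm σ X).det ≠ 0 := by
  intro h
  obtain ⟨v, hv, hv0⟩ := (Matrix.exists_mulVec_eq_zero_iff).2 h
  have hq := quad σ X v
  rw [hv0, dotProduct_zero] at hq
  have h2 := mul_pos (show (0:ℝ) < σ ^ 2 / 2 by positivity) (sq_sum_pos hv)
  linarith

noncomputable def myInv (M : Matrix (Fin d) (Fin d) ℝ) : Matrix (Fin d) (Fin d) ℝ :=
  (M.det)⁻¹ • M.adjugate

lemma mul_myInv {M : Matrix (Fin d) (Fin d) ℝ} (h : M.det ≠ 0) : M * myInv M = 1 := by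
  rw [myInv, Matrix.mul_smul, Matrix.mul_adjugate, smul_smul, inv_mul_cancel₀ h, one_smul]

lemma mulVec_myInv {M : Matrix (Fin d) (Fin d) ℝ} (h : M.det ≠ 0) (w : Fin d → ℝ) :
    M *ᵥ (myInv M *ᵥ w) = w := by
  rw [Matrix.mulVec_mulVec, mul_myInv h, Matrix.one_mulVec]

end C2AuxNS

namespace C2AuxNS
open Matrix
variable {d : ℕ}

lemma key {σ : ℝ} {B E : Matrix (Fin d) (Fin d) ℝ}
    (hB : ∀ i j : Fin d, i ≠ j → B i j + B j i - B i i - B j j = σ ^ 2)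
    (hE : Eᵀ = -E) (i j : Fin d) :
    B i j + E i j + Rm σ (B + E) i j = B i i / 2 + B j j / 2 + σ ^ 2 / 2 := by
  have hEji : E j i = - E i j := by
    have := congrFun (congrFun hE j) i
    simpa [Matrix.transpose_apply, Matrix.neg_apply, eq_neg_iff_add_eq_zero,
      add_comm] using this
  rcases eq_or_ne i j with rfl | h
  · have hEii : E i i = 0 := by linarith
    simp [Rm_apply, Matrix.add_apply, hEii]
  · have h1 := hB i j h
    simp only [Rm_apply, Matrix.add_apply, if_neg h]
    linarith

lemma rowsum {σ : ℝ} {B E : Matrix (Fin d) (Fin d) ℝ}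
    (hB : ∀ i j : Fin d, i ≠ j → B i j + B j i - B i i - B j j = σ ^ 2)
    (hE : Eᵀ = -E) (x : Fin d → ℝ) (i : Fin d) :
    ∑ j, (B i j + E i j) * x j
      = B i i / 2 * (∑ j, x j) + (∑ j, B j j / 2 * x j) + σ ^ 2 / 2 * (∑ j, x j)
        - (Rm σ (B + E) *ᵥ x) i := by
  have h1 : ∀ j, (B i j + E i j) * x j
      = (B i i / 2 * x j + B j j / 2 * x j + σ ^ 2 / 2 * x j) - Rm σ (B + E) i j * x j := by
    intro j
    have hk := key hB hE i j
    have : B i j + E i j = (B i i / 2 + B j j / 2 + σ ^ 2 / 2) - Rm σ (B + E) i j := by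
      linarith
    rw [this]; ring
  calc ∑ j, (B i j + E i j) * x j
      = ∑ j, ((B i i / 2 * x j + B j j / 2 * x j + σ ^ 2 / 2 * x j) - Rm σ (B + E) i j * x j) :=
        Finset.sum_congr rfl fun j _ => h1 j
    _ = B i i / 2 * (∑ j, x j) + (∑ j, B j j / 2 * x j) + σ ^ 2 / 2 * (∑ j, x j)
        - (Rm σ (B + E) *ᵥ x) i := by
        simp only [Finset.sum_sub_distrib, Finset.sum_add_distrib, ← Finset.mul_sum,
          Matrix.mulVec, dotProduct]

end C2AuxNS

namespace C2AuxNS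
open Matrix

theorem aux {d : ℕ} (hd : 2 ≤ d)
    (σ : ℝ) (hσ : 0 < σ) (A : Matrix (Fin d) (Fin d) ℝ)
    (hC1 : ∀ i j : Fin d, i ≠ j → A i j + A j i - A i i - A j j = σ ^ 2)
    (hC2 : ∃ (α : Fin d → ℝ) (c : ℝ), (∀ i, 0 < α i) ∧ (∑ i, α i = 1) ∧
        ∀ i, ∑ j, (A i j - σ ^ 2 / 2) * α j = c) :
    ∃ δ > (0 : ℝ), ∀ E : Matrix (Fin d) (Fin d) ℝ, Eᵀ = -E → (∀ i j, |E i j| < δ) →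
      ∃ (α' : Fin d → ℝ) (c' : ℝ), (∀ i, 0 < α' i) ∧ (∑ i, α' i = 1) ∧
        ∀ i, ∑ j, ((A + E) i j - σ ^ 2 / 2) * α' j = c' := by
  obtain ⟨α, c, hαpos, hαsum, hαeq⟩ := hC2
  have i0 : Fin d := ⟨0, by omega⟩
  set B : Matrix (Fin d) (Fin d) ℝ := Matrix.of (fun i j => A i j - σ ^ 2 / 2) with hBdef
  have hB : ∀ i j : Fin d, i ≠ j → B i j + B j i - B i i - B j j = σ ^ 2 := by
    intro i j h
    have := hC1 i j h
    simp only [hBdef, Matrix.of_apply]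
    linarith
  set v : Fin d → ℝ := fun j => B j j / 2 with hvdef
  set ones : Fin d → ℝ := fun _ => (1 : ℝ) with honesdef
  set F : (Fin d → Fin d → ℝ) → Matrix (Fin d) (Fin d) ℝ :=
    fun e => Rm σ (B + Matrix.of e) with hFdef
  have hdet : ∀ e, (F e).det ≠ 0 := fun e => Rm_det_ne hσ _
  set N : (Fin d → Fin d → ℝ) → Matrix (Fin d) (Fin d) ℝ := fun e => myInv (F e) with hNdef
  set p : (Fin d → Fin d → ℝ) → (Fin d → ℝ) := fun e => N e *ᵥ v with hpdef
  set q : (Fin d → Fin d → ℝ) → (Fin d → ℝ) := fun e => N e *ᵥ ones with hqdef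
  have hRp : ∀ e, F e *ᵥ p e = v := fun e => mulVec_myInv (hdet e) v
  have hRq : ∀ e, F e *ᵥ q e = ones := fun e => mulVec_myInv (hdet e) ones
  have hqpos : ∀ e, 0 < ∑ i, q e i := by
    intro e
    have hq0 : q e ≠ 0 := by
      intro h0
      have := hRq e
      rw [h0, Matrix.mulVec_zero] at this
      have := congrFun this i0
      simp [honesdef] at this
    have h1 : ∑ i, q e i = q e ⬝ᵥ (F e *ᵥ q e) := by
      rw [hRq e]; simp [dotProduct, honesdef]
    rw [h1, hFdef, quad]
    exact mul_pos (by positivity) (sq_sum_pos hq0)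
  set t : (Fin d → Fin d → ℝ) → ℝ := fun e => (1 - ∑ i, p e i) / (∑ i, q e i) with htdef
  set g : (Fin d → Fin d → ℝ) → (Fin d → ℝ) := fun e => fun i => p e i + t e * q e i
    with hgdef
  have hgsum : ∀ e, ∑ i, g e i = 1 := by
    intro e
    have hne := ne_of_gt (hqpos e)
    simp only [hgdef, Finset.sum_add_distrib, ← Finset.mul_sum, htdef]
    rw [div_mul_cancel₀ _ hne]
    ring
  have hRg : ∀ e i, (F e *ᵥ g e) i = v i + t e := by
    intro e i
    have hge : g e = p e + t e • q e := by
      funext i; simp [hgdef]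
    rw [hge, Matrix.mulVec_add, Matrix.mulVec_smul, hRp, hRq]
    simp [honesdef]
  -- evaluation of the perturbed sums
  have heval : ∀ e : Fin d → Fin d → ℝ, (Matrix.of e)ᵀ = -(Matrix.of e) → ∀ i,
      ∑ j, ((A + Matrix.of e) i j - σ ^ 2 / 2) * g e j
        = (∑ j, v j * g e j) + σ ^ 2 / 2 - t e := by
    intro e he i
    have h1 : ∀ j, (A + Matrix.of e) i j - σ ^ 2 / 2 = B i j + (Matrix.of e) i j := by
      intro j; simp [hBdef, Matrix.add_apply]; ring
    calc ∑ j, ((A + Matrix.of e) i j - σ ^ 2 / 2) * g e j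
        = ∑ j, (B i j + (Matrix.of e) i j) * g e j :=
          Finset.sum_congr rfl fun j _ => by rw [h1 j]
      _ = B i i / 2 * (∑ j, g e j) + (∑ j, B j j / 2 * g e j) + σ ^ 2 / 2 * (∑ j, g e j)
            - (Rm σ (B + Matrix.of e) *ᵥ g e) i := rowsum hB he (g e) i
      _ = (∑ j, v j * g e j) + σ ^ 2 / 2 - t e := by
          have h2 : (Rm σ (B + Matrix.of e) *ᵥ g e) i = v i + t e := hRg e i
          rw [hgsum e, h2]
          simp only [hvdef]
          ring
  -- identification of g 0 with α
  have hF0 : F 0 = Rm σ B := by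
    simp only [hFdef]
    norm_num
  have hRα : Rm σ B *ᵥ α = fun i => v i + ((∑ j, v j * α j) + σ ^ 2 / 2 - c) := by
    funext i
    have h0 : ((0 : Matrix (Fin d) (Fin d) ℝ))ᵀ = -0 := by simp
    have hr := rowsum (σ := σ) (E := 0) hB h0 α i
    simp only [Matrix.zero_apply, add_zero] at hr
    have hl : ∑ j, B i j * α j = c := by
      rw [← hαeq i]
      exact Finset.sum_congr rfl fun j _ => by simp [hBdef]
    rw [hl, hαsum] at hr
    simp only [hvdef]
    linarith
  have hg0 : g 0 = α := by
    set w : Fin d → ℝ := fun i => g 0 i - α i with hwdef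
    have hwsum : ∑ i, w i = 0 := by
      simp [hwdef, Finset.sum_sub_distrib, hgsum 0, hαsum]
    have hRw : Rm σ B *ᵥ w = fun _ => (t 0 - ((∑ j, v j * α j) + σ ^ 2 / 2 - c)) := by
      have hw : w = g 0 - α := rfl
      rw [hw, Matrix.mulVec_sub]
      funext i
      have h1 : (Rm σ B *ᵥ g 0) i = v i + t 0 := by rw [← hF0]; exact hRg 0 i
      have h2 : (Rm σ B *ᵥ α) i = v i + ((∑ j, v j * α j) + σ ^ 2 / 2 - c) := by rw [hRα]
      simp only [Pi.sub_apply, h1, h2]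
      ring
    have hdot : w ⬝ᵥ (Rm σ B *ᵥ w) = 0 := by
      rw [hRw]
      simp only [dotProduct]
      rw [← Finset.sum_mul, hwsum, zero_mul]
    rw [quad] at hdot
    have hww : w ⬝ᵥ w = 0 := by
      have : σ ^ 2 / 2 ≠ 0 := by positivity
      exact (mul_eq_zero.mp hdot).resolve_left this
    simp only [dotProduct] at hww
    have hwz : ∀ i, w i = 0 := by
      intro i
      have h3 := (Finset.sum_eq_zero_iff_of_nonneg
        (fun j (_ : j ∈ Finset.univ) => mul_self_nonneg (w j))).mp hww i (Finset.mem_univ i)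
      exact mul_self_eq_zero.mp h3
    funext i
    have := hwz i
    simp only [hwdef] at this
    linarith
  -- continuity of g
  have hFc : Continuous F := by
    apply continuous_matrix
    intro i j
    show Continuous fun e : Fin d → Fin d → ℝ =>
      (if i = j then σ ^ 2 / 2 else 0) - ((B + Matrix.of e) i j - (B + Matrix.of e) j i) / 2
    simp only [Matrix.add_apply, Matrix.of_apply]
    exact continuous_const.sub
      (((continuous_const.add (continuous_apply_apply i j)).sub
        (continuous_const.add (continuous_apply_apply j i))).div_const 2)
  have hNc : Continuous N := by
    have hdetc : Continuous fun e => (F e).det := hFc.matrix_det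
    have hadjc : Continuous fun e => (F e).adjugate := hFc.matrix_adjugate
    have hinvc : Continuous fun e => ((F e).det)⁻¹ :=
      continuous_iff_continuousAt.2 fun e => (hdetc.continuousAt).inv₀ (hdet e)
    show Continuous fun e => ((F e).det)⁻¹ • (F e).adjugate
    exact hinvc.smul hadjc
  have hpc : Continuous p := by
    apply continuous_pi
    intro i
    show Continuous fun e => ∑ j, N e i j * v j
    exact continuous_finset_sum _ fun j _ => (hNc.matrix_elem i j).mul continuous_const
  have hqc : Continuous q := by
    apply continuous_pi
    intro i
    show Continuous fun e => ∑ j, N e i j * ones j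
    exact continuous_finset_sum _ fun j _ => (hNc.matrix_elem i j).mul continuous_const
  have htc : Continuous t := by
    have h1 : Continuous fun e => 1 - ∑ i, p e i :=
      continuous_const.sub (continuous_finset_sum _ fun i _ => (continuous_apply i).comp hpc)
    have h2 : Continuous fun e => ∑ i, q e i :=
      continuous_finset_sum _ fun i _ => (continuous_apply i).comp hqc
    exact h1.div h2 fun e => ne_of_gt (hqpos e)
  have hgc : Continuous g :=
    continuous_pi fun i =>
      ((continuous_apply i).comp hpc).add (htc.mul ((continuous_apply i).comp hqc))
  -- extract δ
  obtain ⟨i1, _, hmin⟩ := Finset.exists_min_image Finset.univ α ⟨i0, Finset.mem_univ i0⟩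
  obtain ⟨δ, hδpos, hδ⟩ := Metric.continuous_iff.mp hgc 0 (α i1) (hαpos i1)
  refine ⟨δ, hδpos, ?_⟩
  intro E hE hEsmall
  set e : Fin d → Fin d → ℝ := fun i j => E i j with hedef
  have heq : Matrix.of e = E := rfl
  have hdist : dist e 0 < δ := by
    rw [dist_pi_lt_iff hδpos]
    intro i
    rw [dist_pi_lt_iff hδpos]
    intro j
    simpa [Real.dist_eq, hedef] using hEsmall i j
  have hnear := hδ e hdist
  rw [hg0] at hnear
  have hpos : ∀ i, 0 < g e i := by
    intro i
    have h1 : dist (g e i) (α i) ≤ dist (g e) α := dist_le_pi_dist (g e) α i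
    have h2 : |g e i - α i| < α i1 := by
      rw [← Real.dist_eq]; exact lt_of_le_of_lt h1 hnear
    have h3 := hmin i (Finset.mem_univ i)
    have h4 := abs_lt.mp h2
    linarith
  refine ⟨g e, (∑ j, v j * g e j) + σ ^ 2 / 2 - t e, hpos, hgsum e, ?_⟩
  intro i
  have he' : (Matrix.of e)ᵀ = -(Matrix.of e) := by rw [heq]; exact hE
  have hfin := heval e he' i
  rw [heq] at hfin
  exact hfin
end C2AuxNS


open Matrix
open scoped Matrix.Norms.L2Operator

theorem entry_abs_le_l2_opNorm {d : ℕ} (E : Matrix (Fin d) (Fin d) ℝ) (i j : Fin d) :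
    |E i j| ≤ ‖E‖ := by
  have h1 := E.l2_opNorm_mulVec (EuclideanSpace.single j (1:ℝ))
  rw [EuclideanSpace.norm_single, norm_one, mul_one] at h1
  set y : EuclideanSpace ℝ (Fin d) :=
    (EuclideanSpace.equiv (Fin d) ℝ).symm (E *ᵥ EuclideanSpace.single j (1:ℝ)) with hy
  have hyi : y i = E i j := by
    show (E *ᵥ (EuclideanSpace.single j (1:ℝ) : EuclideanSpace ℝ (Fin d))) i = E i j
    have : WithLp.ofLp (EuclideanSpace.single j (1:ℝ) : EuclideanSpace ℝ (Fin d)) = Pi.single j 1 := by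
      ext k; simp [EuclideanSpace.single_apply, Pi.single_apply]
    rw [this, Matrix.mulVec_single]
    simp
  have h2 : |y i| ≤ ‖y‖ := by
    rw [EuclideanSpace.norm_eq, ← Real.sqrt_sq_eq_abs]
    apply Real.sqrt_le_sqrt
    have := Finset.single_le_sum (f := fun k => ‖y k‖ ^ 2)
      (fun k _ => sq_nonneg ‖y k‖) (Finset.mem_univ i)
    simpa [sq_abs, Real.norm_eq_abs] using this
  calc |E i j| = |y i| := by rw [hyi]
    _ ≤ ‖y‖ := h2
    _ ≤ ‖E‖ := h1

/-- Let `d ≥ 2`, `σ > 0`, and let `A` be a `d × d` real matrix satisfying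
conditions [C1] and [C2] with parameter `σ`. Then there exists `δ > 0` such that for every
skew-symmetric matrix `E` with operator norm `‖E‖ < δ`, the matrix `A + E` satisfies
condition [C2] with parameter `σ`. -/
theorem C2_stable_under_small_skew_perturbation {d : ℕ} (hd : 2 ≤ d)
    (σ : ℝ) (hσ : 0 < σ) (A : Matrix (Fin d) (Fin d) ℝ)
    (hC1 : ∀ i j : Fin d, i ≠ j → A i j + A j i - A i i - A j j = σ ^ 2)
    (hC2 : ∃ (α : Fin d → ℝ) (c : ℝ), (∀ i, 0 < α i) ∧ (∑ i, α i = 1) ∧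
        ∀ i, ∑ j, (A i j - σ ^ 2 / 2) * α j = c) :
    ∃ δ > (0 : ℝ), ∀ E : Matrix (Fin d) (Fin d) ℝ, Eᵀ = -E → ‖E‖ < δ →
      ∃ (α' : Fin d → ℝ) (c' : ℝ), (∀ i, 0 < α' i) ∧ (∑ i, α' i = 1) ∧
        ∀ i, ∑ j, ((A + E) i j - σ ^ 2 / 2) * α' j = c' := by
  obtain ⟨δ, hδpos, hδ⟩ := C2AuxNS.aux hd σ hσ A hC1 hC2
  refine ⟨δ, hδpos, ?_⟩
  intro E hE hnorm
  exact hδ E hE fun i j => lt_of_le_of_lt (entry_abs_le_l2_opNorm E i j) hnorm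
end

section
/- Let d ≥ 2, σ > 0, and let A be a d×d real matrix satisfying conditions [C1] and [C2] with parameter σ. Then there exist δ > 0 and C > 0 such that for all skew-symmetric d×d real matrices E₁, E₂ with ‖E₁‖ ≤ δ and ‖E₂‖ ≤ δ (operator norm), and all vectors α₁, α₂ ∈ ℝ^d with strictly positive entries summing to 1 such that for each k ∈ {1,2} the vector with i-th entry ∑_j ((A+E_k)_{ij} − σ²/2) (α_k)_j is a constant vector (its entries do not depend on i), one has ‖α₁ − α₂‖₁ ≤ C · ‖E₁ − E₂‖. -/
open Matrix
open scoped Matrix.Norms.L2Operator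

/-- Let `d ≥ 2`, `σ > 0`, and let `A` satisfy conditions [C1] and [C2] with
parameter `σ`. Then there exist `δ > 0` and `C > 0` such that for all skew-symmetric matrices
`E₁, E₂` of operator norm at most `δ`, and all strictly positive vectors `α₁, α₂` summing to `1`
such that `((A + Eₖ) - σ²/2) αₖ` is a constant vector for `k = 1, 2`, one has
`‖α₁ - α₂‖₁ ≤ C ‖E₁ - E₂‖`. -/
theorem nash_equilibrium_lipschitz_in_perturbation {d : ℕ} (hd : 2 ≤ d)
    (σ : ℝ) (hσ : 0 < σ) (A : Matrix (Fin d) (Fin d) ℝ)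
    (hC1 : ∀ i j : Fin d, i ≠ j → A i j + A j i - A i i - A j j = σ ^ 2)
    (hC2 : ∃ (α : Fin d → ℝ) (c : ℝ), (∀ i, 0 < α i) ∧ (∑ i, α i = 1) ∧
        ∀ i, ∑ j, (A i j - σ ^ 2 / 2) * α j = c) :
    ∃ δ > (0 : ℝ), ∃ C > (0 : ℝ),
      ∀ E₁ E₂ : Matrix (Fin d) (Fin d) ℝ, E₁ᵀ = -E₁ → E₂ᵀ = -E₂ →
        ‖E₁‖ ≤ δ → ‖E₂‖ ≤ δ →
        ∀ α₁ α₂ : Fin d → ℝ,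
          (∀ i, 0 < α₁ i) → (∑ i, α₁ i = 1) →
          (∀ i, 0 < α₂ i) → (∑ i, α₂ i = 1) →
          (∃ c₁ : ℝ, ∀ i, ∑ j, ((A + E₁) i j - σ ^ 2 / 2) * α₁ j = c₁) →
          (∃ c₂ : ℝ, ∀ i, ∑ j, ((A + E₂) i j - σ ^ 2 / 2) * α₂ j = c₂) →
          ∑ i, |α₁ i - α₂ i| ≤ C * ‖E₁ - E₂‖ := by
  have hdpos : (0 : ℝ) < d := by
    have : (0:ℕ) < d := by omega
    exact_mod_cast this
  refine ⟨1, one_pos, 2 * d / σ ^ 2, by positivity, ?_⟩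
  intro E₁ E₂ hE₁ hE₂ _ _ α₁ α₂ h1pos h1sum h2pos h2sum ⟨c₁, hc₁⟩ ⟨c₂, hc₂⟩
  set x : Fin d → ℝ := fun i => α₁ i - α₂ i with hxdef
  have hxsum : ∑ i, x i = 0 := by
    simp [hxdef, Finset.sum_sub_distrib, h1sum, h2sum]
  have hE₁skew : ∀ i j, E₁ j i = -E₁ i j := by
    intro i j
    have := congrFun (congrFun hE₁ i) j
    simpa [Matrix.transpose_apply] using this
  -- pointwise symmetrization using C1
  have hsym : ∀ i j : Fin d, (A + E₁) i j + (A + E₁) j i - σ ^ 2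
      = A i i + A j j - (if i = j then σ ^ 2 else 0) := by
    intro i j
    by_cases h : i = j
    · subst h
      have h0 : E₁ i i = 0 := by have := hE₁skew i i; linarith
      simp [Matrix.add_apply, h0]
    · have h1 := hC1 i j h
      have h2 := hE₁skew i j
      simp only [Matrix.add_apply, if_neg h]
      linarith
  -- the quadratic form identity
  have hquad : ∑ i, x i * ∑ j, ((A + E₁) i j - σ ^ 2 / 2) * x j
      = -(σ ^ 2 / 2) * ∑ i, x i ^ 2 := by
    have e1 : ∑ i, x i * ∑ j, ((A + E₁) i j - σ ^ 2 / 2) * x j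
        = ∑ i, ∑ j, ((A + E₁) i j - σ ^ 2 / 2) * (x i * x j) := by
      refine Finset.sum_congr rfl fun i _ => ?_
      rw [Finset.mul_sum]
      exact Finset.sum_congr rfl fun j _ => by ring
    have e2 : ∑ i, ∑ j, ((A + E₁) i j - σ ^ 2 / 2) * (x i * x j)
        = ∑ i, ∑ j, ((A + E₁) j i - σ ^ 2 / 2) * (x i * x j) := by
      rw [Finset.sum_comm]
      exact Finset.sum_congr rfl fun j _ => Finset.sum_congr rfl fun i _ => by ring
    have e3 : (2:ℝ) * ∑ i, ∑ j, ((A + E₁) i j - σ ^ 2 / 2) * (x i * x j)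
        = ∑ i, ∑ j, ((A + E₁) i j + (A + E₁) j i - σ ^ 2) * (x i * x j) := by
      rw [two_mul]
      nth_rewrite 2 [e2]
      rw [← Finset.sum_add_distrib]
      refine Finset.sum_congr rfl fun i _ => ?_
      rw [← Finset.sum_add_distrib]
      exact Finset.sum_congr rfl fun j _ => by ring
    have e4 : ∑ i, ∑ j, ((A + E₁) i j + (A + E₁) j i - σ ^ 2) * (x i * x j)
        = -(σ ^ 2) * ∑ i, x i ^ 2 := by
      have t0 : ∀ i j : Fin d, ((A + E₁) i j + (A + E₁) j i - σ ^ 2) * (x i * x j)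
          = (A i i * x i) * x j + x i * (A j j * x j)
            - (if i = j then σ ^ 2 * (x i * x j) else 0) := by
        intro i j
        rw [hsym i j]
        by_cases h : i = j
        · simp only [if_pos h]; ring
        · simp only [if_neg h]; ring
      calc ∑ i, ∑ j, ((A + E₁) i j + (A + E₁) j i - σ ^ 2) * (x i * x j)
          = ∑ i, ∑ j, ((A i i * x i) * x j + x i * (A j j * x j)
              - (if i = j then σ ^ 2 * (x i * x j) else 0)) :=
            Finset.sum_congr rfl fun i _ => Finset.sum_congr rfl fun j _ => t0 i j
        _ = ∑ i, ((A i i * x i) * ∑ j, x j + x i * ∑ j, A j j * x j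
              - σ ^ 2 * (x i * x i)) := by
            refine Finset.sum_congr rfl fun i _ => ?_
            rw [Finset.sum_sub_distrib, Finset.sum_add_distrib, ← Finset.mul_sum,
              ← Finset.mul_sum]
            congr 1
            simp
        _ = -(σ ^ 2) * ∑ i, x i ^ 2 := by
            simp only [hxsum, mul_zero, zero_add]
            rw [Finset.sum_sub_distrib, ← Finset.sum_mul, hxsum, zero_mul, zero_sub]
            have : ∑ i, σ ^ 2 * (x i * x i) = σ ^ 2 * ∑ i, x i ^ 2 := by
              rw [Finset.mul_sum]; exact Finset.sum_congr rfl fun i _ => by ring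
            rw [this]; ring
    linarith [e1, e3, e4]
  -- row-wise difference equation
  have hrow : ∀ i, ∑ j, ((A + E₁) i j - σ ^ 2 / 2) * x j
      = (c₁ - c₂) - ∑ j, (E₁ - E₂) i j * α₂ j := by
    intro i
    have expand : ∀ j, ((A + E₁) i j - σ ^ 2 / 2) * x j
        = ((A + E₁) i j - σ ^ 2 / 2) * α₁ j
          - (((A + E₂) i j - σ ^ 2 / 2) * α₂ j + (E₁ - E₂) i j * α₂ j) := by
      intro j
      simp only [hxdef, Matrix.add_apply, Matrix.sub_apply]
      ring
    rw [Finset.sum_congr rfl fun j _ => expand j, Finset.sum_sub_distrib,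
      Finset.sum_add_distrib, hc₁ i, hc₂ i]
    ring
  -- main energy identity
  set y : Fin d → ℝ := fun i => ∑ j, (E₁ - E₂) i j * α₂ j with hydef
  have hmain : σ ^ 2 / 2 * ∑ i, x i ^ 2 = ∑ i, x i * y i := by
    have h1 : ∑ i, x i * ∑ j, ((A + E₁) i j - σ ^ 2 / 2) * x j
        = ∑ i, (x i * (c₁ - c₂) - x i * y i) := by
      refine Finset.sum_congr rfl fun i _ => ?_
      rw [hrow i]; ring
    rw [hquad] at h1
    rw [Finset.sum_sub_distrib, ← Finset.sum_mul, hxsum, zero_mul, zero_sub] at h1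
    linarith
  -- Cauchy-Schwarz
  have hCS : ∑ i, x i * y i
      ≤ Real.sqrt (∑ i, x i ^ 2) * Real.sqrt (∑ i, y i ^ 2) := by
    have h := Finset.sum_mul_sq_le_sq_mul_sq Finset.univ x y
    calc ∑ i, x i * y i ≤ |∑ i, x i * y i| := le_abs_self _
      _ = Real.sqrt ((∑ i, x i * y i) ^ 2) := (Real.sqrt_sq_eq_abs _).symm
      _ ≤ Real.sqrt ((∑ i, x i ^ 2) * ∑ i, y i ^ 2) := Real.sqrt_le_sqrt h
      _ = Real.sqrt (∑ i, x i ^ 2) * Real.sqrt (∑ i, y i ^ 2) :=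
          Real.sqrt_mul (Finset.sum_nonneg fun i _ => sq_nonneg _) _
  -- operator norm bound on y
  have hα2sq : ∑ i, α₂ i ^ 2 ≤ 1 := by
    have hle1 : ∀ i, α₂ i ≤ 1 := by
      intro i
      rw [← h2sum]
      exact Finset.single_le_sum (fun j _ => (h2pos j).le) (Finset.mem_univ i)
    calc ∑ i, α₂ i ^ 2 ≤ ∑ i, α₂ i :=
          Finset.sum_le_sum fun i _ => by nlinarith [h2pos i, hle1 i]
      _ = 1 := h2sum
  have hopy : Real.sqrt (∑ i, y i ^ 2) ≤ ‖E₁ - E₂‖ := by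
    have h := Matrix.l2_opNorm_mulVec (E₁ - E₂)
      ((WithLp.equiv 2 (Fin d → ℝ)).symm α₂)
    have hn1 : ‖(EuclideanSpace.equiv (Fin d) ℝ).symm
        ((E₁ - E₂) *ᵥ (WithLp.equiv 2 (Fin d → ℝ)).symm α₂)‖
        = Real.sqrt (∑ i, y i ^ 2) := by
      rw [EuclideanSpace.norm_eq]
      congr 1
      refine Finset.sum_congr rfl fun i _ => ?_
      simp [hydef, Matrix.mulVec, dotProduct, Real.norm_eq_abs, sq_abs]
    have hn2 : ‖(WithLp.equiv 2 (Fin d → ℝ)).symm α₂‖ = Real.sqrt (∑ i, α₂ i ^ 2) := by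
      rw [EuclideanSpace.norm_eq]
      congr 1
      exact Finset.sum_congr rfl fun i _ => by
        simp [Real.norm_eq_abs, sq_abs]
    rw [hn1, hn2] at h
    calc Real.sqrt (∑ i, y i ^ 2) ≤ ‖E₁ - E₂‖ * Real.sqrt (∑ i, α₂ i ^ 2) := h
      _ ≤ ‖E₁ - E₂‖ * 1 := by
          gcongr
          exact Real.sqrt_le_one.mpr hα2sq
      _ = ‖E₁ - E₂‖ := mul_one _
  -- put it together
  set S : ℝ := Real.sqrt (∑ i, x i ^ 2) with hSdef
  have hS0 : 0 ≤ S := Real.sqrt_nonneg _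
  have hSsq : S ^ 2 = ∑ i, x i ^ 2 :=
    Real.sq_sqrt (Finset.sum_nonneg fun i _ => sq_nonneg _)
  have hB0 : (0:ℝ) ≤ ‖E₁ - E₂‖ := norm_nonneg _
  have hkey : σ ^ 2 / 2 * S ^ 2 ≤ S * ‖E₁ - E₂‖ := by
    rw [hSsq]
    calc σ ^ 2 / 2 * ∑ i, x i ^ 2 = ∑ i, x i * y i := hmain
      _ ≤ S * Real.sqrt (∑ i, y i ^ 2) := hCS
      _ ≤ S * ‖E₁ - E₂‖ := by gcongr
  have habs : ∀ i, |x i| ≤ S := by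
    intro i
    rw [← Real.sqrt_sq_eq_abs]
    exact Real.sqrt_le_sqrt
      (Finset.single_le_sum (f := fun j => x j ^ 2) (fun j _ => sq_nonneg _)
        (Finset.mem_univ i))
  have hsum_abs : ∑ i, |x i| ≤ d * S := by
    calc ∑ i, |x i| ≤ ∑ _i : Fin d, S := Finset.sum_le_sum fun i _ => habs i
      _ = d * S := by simp [mul_comm]
  have hfinal : ∑ i, |x i| ≤ 2 * d / σ ^ 2 * ‖E₁ - E₂‖ := by
    rcases eq_or_lt_of_le hS0 with h | h
    · have : ∑ i, |x i| ≤ d * S := hsum_abs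
      rw [← h] at this
      simp only [mul_zero] at this
      calc ∑ i, |x i| ≤ 0 := this
        _ ≤ 2 * d / σ ^ 2 * ‖E₁ - E₂‖ := by positivity
    · have hσ2 : 0 < σ ^ 2 := by positivity
      have hS_le : S ≤ 2 / σ ^ 2 * ‖E₁ - E₂‖ := by
        rw [div_mul_eq_mul_div, le_div_iff₀ hσ2]
        nlinarith [hkey]
      calc ∑ i, |x i| ≤ d * S := hsum_abs
        _ ≤ d * (2 / σ ^ 2 * ‖E₁ - E₂‖) := by gcongr
        _ = 2 * d / σ ^ 2 * ‖E₁ - E₂‖ := by ring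
  exact hfinal
end

section
/- Let A be a d×d real matrix and σ ∈ ℝ such that A satisfies condition [C1] with parameter σ. Then for every x ∈ ℝ^d with ∑_{i=1}^d x_i = 0, one has xᵀ A x = −(σ²/2) · ∑_{i=1}^d x_i². -/
open Matrix

/-- If a `d × d` real matrix `A` satisfies condition [C1] with parameter `σ`
(i.e. `A i j + A j i - A i i - A j j = σ²` for all `i ≠ j`), then for every vector `x`
whose entries sum to `0`, the quadratic form `xᵀ A x` equals `-(σ²/2) · ∑ i, x i ²`. -/
theorem quadratic_form_of_C1 {d : ℕ} (A : Matrix (Fin d) (Fin d) ℝ) (σ : ℝ)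
    (hC1 : ∀ i j : Fin d, i ≠ j → A i j + A j i - A i i - A j j = σ ^ 2)
    (x : Fin d → ℝ) (hx : ∑ i, x i = 0) :
    x ⬝ᵥ A.mulVec x = -(σ ^ 2 / 2) * ∑ i, (x i) ^ 2 := by
  classical
  have hQ : x ⬝ᵥ A.mulVec x = ∑ i, ∑ j, x i * x j * A i j := by
    simp only [dotProduct, mulVec, Finset.mul_sum]
    exact Finset.sum_congr rfl fun i _ => Finset.sum_congr rfl fun j _ => by ring
  have e1 : ∑ i, ∑ j, x i * x j * A j i = ∑ i, ∑ j, x i * x j * A i j := by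
    rw [Finset.sum_comm]
    exact Finset.sum_congr rfl fun i _ => Finset.sum_congr rfl fun j _ => by ring
  have e2 : ∑ i, ∑ j, x i * x j * A i i = 0 := by
    have h : ∀ i : Fin d, ∑ j, x i * x j * A i i = (x i * A i i) * ∑ j, x j := by
      intro i
      rw [Finset.mul_sum]
      exact Finset.sum_congr rfl fun j _ => by ring
    simp [h, hx]
  have e3 : ∑ i, ∑ j, x i * x j * A j j = 0 := by
    rw [Finset.sum_comm]
    have h : ∀ j : Fin d, ∑ i, x i * x j * A j j = (x j * A j j) * ∑ i, x i := by
      intro j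
      rw [Finset.mul_sum]
      exact Finset.sum_congr rfl fun i _ => by ring
    simp [h, hx]
  have expand : ∑ i, ∑ j, x i * x j * (A i j + A j i - A i i - A j j)
      = (∑ i, ∑ j, x i * x j * A i j) + (∑ i, ∑ j, x i * x j * A j i)
        - (∑ i, ∑ j, x i * x j * A i i) - (∑ i, ∑ j, x i * x j * A j j) := by
    simp only [← Finset.sum_add_distrib, ← Finset.sum_sub_distrib]
    exact Finset.sum_congr rfl fun i _ => Finset.sum_congr rfl fun j _ => by ring
  have hsum : ∑ i, ∑ j, x i * x j * (A i j + A j i - A i i - A j j)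
      = 2 * (x ⬝ᵥ A.mulVec x) := by
    rw [expand, e1, e2, e3, ← hQ]; ring
  have hother : ∑ i, ∑ j, x i * x j * (A i j + A j i - A i i - A j j)
      = -σ ^ 2 * ∑ i, (x i) ^ 2 := by
    have step : ∀ i j : Fin d, x i * x j * (A i j + A j i - A i i - A j j)
        = σ ^ 2 * (x i * x j) - (if i = j then σ ^ 2 * (x i * x j) else 0) := by
      intro i j
      by_cases h : i = j
      · subst h; simp
      · rw [hC1 i j h]; simp [h]; ring
    simp only [step]
    have hA : ∑ i, ∑ j, (σ ^ 2 * (x i * x j) - (if i = j then σ ^ 2 * (x i * x j) else 0))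
        = ∑ i, ((∑ j, σ ^ 2 * (x i * x j)) - σ ^ 2 * (x i * x i)) := by
      exact Finset.sum_congr rfl fun i _ => by
        rw [Finset.sum_sub_distrib, Finset.sum_ite_eq (Finset.univ) i
          (fun j => σ ^ 2 * (x i * x j))]
        simp
    rw [hA]
    rw [Finset.sum_sub_distrib]
    have h1 : ∑ i, ∑ j, σ ^ 2 * (x i * x j) = 0 := by
      have : ∀ i : Fin d, ∑ j, σ ^ 2 * (x i * x j) = (σ ^ 2 * x i) * ∑ j, x j := by
        intro i; rw [Finset.mul_sum]; exact Finset.sum_congr rfl fun j _ => by ring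
      simp [this, hx]
    rw [h1]
    rw [Finset.mul_sum]
    simp only [zero_sub, ← Finset.sum_neg_distrib]
    exact Finset.sum_congr rfl fun i _ => by ring
  rw [hsum] at hother
  have hs := hother
  linarith [hs]
end

section
/- Let A be a d×d real matrix and σ ≠ 0 such that A satisfies condition [C1] with parameter σ. Then: (1) for every x ∈ ℝ^d with ∑_i x_i = 0 and x ≠ 0, the vector A x is not a constant vector (i.e. Ax is not a scalar multiple of the all-ones vector); and (2) if α, β ∈ ℝ^d both have entries summing to 1 and there exist constants c, c' ∈ ℝ such that ∑_j (A_{ij} − σ²/2) α_j = c for every i and ∑_j (A_{ij} − σ²/2) β_j = c' for every i, then α = β. -/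
open Matrix

lemma C1_quad {d : ℕ} (A : Matrix (Fin d) (Fin d) ℝ) (σ : ℝ)
    (hC1 : ∀ i j : Fin d, i ≠ j → A i j + A j i - A i i - A j j = σ ^ 2)
    (x : Fin d → ℝ) (hx : ∑ i, x i = 0) :
    ∑ i, x i * A.mulVec x i = -(σ ^ 2 / 2) * ∑ i, x i ^ 2 := by
  have key : ∀ i j, A i j + A j i = A i i + A j j + σ ^ 2 - (if i = j then σ ^ 2 else 0) := by
    intro i j
    by_cases h : i = j
    · subst h; simp
    · rw [if_neg h]; linarith [hC1 i j h]
  have hQ : ∑ i, x i * A.mulVec x i = ∑ i, ∑ j, A i j * (x i * x j) := by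
    simp only [mulVec, dotProduct, Finset.mul_sum]
    apply Finset.sum_congr rfl; intro i _
    apply Finset.sum_congr rfl; intro j _
    ring
  have hswap : ∑ i : Fin d, ∑ j : Fin d, A j i * (x i * x j)
      = ∑ i : Fin d, ∑ j : Fin d, A i j * (x i * x j) := by
    rw [Finset.sum_comm]
    apply Finset.sum_congr rfl; intro i _
    apply Finset.sum_congr rfl; intro j _
    ring
  have h2 : 2 * ∑ i : Fin d, ∑ j : Fin d, A i j * (x i * x j)
      = ∑ i : Fin d, ∑ j : Fin d, (A i j + A j i) * (x i * x j) := by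
    simp only [add_mul, Finset.sum_add_distrib, hswap]
    ring
  have T1 : ∑ i : Fin d, ∑ j : Fin d, A i i * (x i * x j) = 0 := by
    simp only [← mul_assoc, ← Finset.mul_sum, hx, mul_zero, Finset.sum_const_zero]
  have T2 : ∑ i : Fin d, ∑ j : Fin d, A j j * (x i * x j) = 0 := by
    rw [Finset.sum_comm]
    have : ∀ j : Fin d, ∑ i : Fin d, A j j * (x i * x j) = 0 := by
      intro j
      have : ∑ i : Fin d, A j j * (x i * x j) = (A j j * x j) * ∑ i, x i := by
        rw [Finset.mul_sum]
        apply Finset.sum_congr rfl; intro i _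
        ring
      rw [this, hx, mul_zero]
    simp [this]
  have T3 : ∑ i : Fin d, ∑ j : Fin d, σ ^ 2 * (x i * x j) = 0 := by
    have : ∀ i : Fin d, ∑ j : Fin d, σ ^ 2 * (x i * x j) = (σ ^ 2 * x i) * ∑ j, x j := by
      intro i
      rw [Finset.mul_sum]
      apply Finset.sum_congr rfl; intro j _
      ring
    simp [this, hx]
  have T4 : ∑ i : Fin d, ∑ j : Fin d, (if i = j then σ ^ 2 else 0) * (x i * x j)
      = σ ^ 2 * ∑ i, x i ^ 2 := by
    simp only [ite_mul, zero_mul, Finset.sum_ite_eq, Finset.mem_univ, if_true]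
    rw [Finset.mul_sum]
    apply Finset.sum_congr rfl; intro i _
    ring
  have hfin : 2 * ∑ i : Fin d, ∑ j : Fin d, A i j * (x i * x j)
      = -(σ ^ 2 * ∑ i, x i ^ 2) := by
    rw [h2]
    have : ∀ i j : Fin d, (A i j + A j i) * (x i * x j)
        = A i i * (x i * x j) + A j j * (x i * x j) + σ ^ 2 * (x i * x j)
          - (if i = j then σ ^ 2 else 0) * (x i * x j) := by
      intro i j; rw [key i j]; ring
    calc ∑ i : Fin d, ∑ j : Fin d, (A i j + A j i) * (x i * x j)
        = ∑ i : Fin d, ∑ j : Fin d, (A i i * (x i * x j) + A j j * (x i * x j)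
            + σ ^ 2 * (x i * x j) - (if i = j then σ ^ 2 else 0) * (x i * x j)) := by
          apply Finset.sum_congr rfl; intro i _
          apply Finset.sum_congr rfl; intro j _
          exact this i j
      _ = -(σ ^ 2 * ∑ i, x i ^ 2) := by
          simp only [Finset.sum_add_distrib, Finset.sum_sub_distrib, T1, T2, T3, T4]
          ring
  rw [hQ]; linarith

/-- Let `A` satisfy condition [C1] with parameter `σ ≠ 0`. Then:
(1) for every nonzero `x` with entries summing to `0`, `A x` is not a constant vector; and
(2) any two vectors `α`, `β` with entries summing to `1` such that `(A - σ²/2) α` and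
`(A - σ²/2) β` are constant vectors must coincide. -/
theorem C1_nash_uniqueness {d : ℕ} (A : Matrix (Fin d) (Fin d) ℝ) (σ : ℝ) (hσ : σ ≠ 0)
    (hC1 : ∀ i j : Fin d, i ≠ j → A i j + A j i - A i i - A j j = σ ^ 2) :
    (∀ x : Fin d → ℝ, ∑ i, x i = 0 → x ≠ 0 →
        ¬ ∃ c : ℝ, ∀ i, A.mulVec x i = c) ∧
    (∀ α β : Fin d → ℝ, ∑ i, α i = 1 → ∑ i, β i = 1 →
        (∃ c : ℝ, ∀ i, ∑ j, (A i j - σ ^ 2 / 2) * α j = c) →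
        (∃ c' : ℝ, ∀ i, ∑ j, (A i j - σ ^ 2 / 2) * β j = c') →
        α = β) := by
  have part1 : ∀ x : Fin d → ℝ, ∑ i, x i = 0 → x ≠ 0 →
      ¬ ∃ c : ℝ, ∀ i, A.mulVec x i = c := by
    intro x hx hx0 ⟨c, hc⟩
    have hz : ∑ i, x i * A.mulVec x i = 0 := by
      have : ∑ i, x i * A.mulVec x i = c * ∑ i, x i := by
        rw [Finset.mul_sum]
        apply Finset.sum_congr rfl; intro i _
        rw [hc i]; ring
      rw [this, hx, mul_zero]
    have hq := C1_quad A σ hC1 x hx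
    rw [hz] at hq
    have hs : ∑ i, x i ^ 2 = 0 := by
      have hσ2 : σ ^ 2 ≠ 0 := pow_ne_zero _ hσ
      have h' : σ ^ 2 / 2 * ∑ i, x i ^ 2 = 0 := by linarith
      rcases mul_eq_zero.mp h' with h | h
      · exact absurd (by linarith : σ ^ 2 = 0) hσ2
      · exact h
    have : ∀ i, x i = 0 := by
      intro i
      have := (Finset.sum_eq_zero_iff_of_nonneg (fun i _ => sq_nonneg (x i))).mp hs i
        (Finset.mem_univ i)
      exact pow_eq_zero_iff (two_ne_zero) |>.mp this
    exact hx0 (funext this)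
  refine ⟨part1, ?_⟩
  intro α β hα hβ ⟨c, hc⟩ ⟨c', hc'⟩
  by_contra hne
  have hx0 : (fun i => α i - β i) ≠ 0 := by
    intro h
    apply hne
    funext i
    have := congrFun h i
    simp at this
    linarith
  have hxs : ∑ i, (α i - β i) = 0 := by
    rw [Finset.sum_sub_distrib, hα, hβ]; ring
  apply part1 (fun i => α i - β i) hxs hx0
  refine ⟨c - c', fun i => ?_⟩
  have e1 : ∑ j, A i j * α j = c + σ ^ 2 / 2 := by
    have : ∑ j, A i j * α j = ∑ j, ((A i j - σ ^ 2 / 2) * α j + σ ^ 2 / 2 * α j) := by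
      apply Finset.sum_congr rfl; intro j _; ring
    rw [this, Finset.sum_add_distrib, hc i, ← Finset.mul_sum, hα, mul_one]
  have e2 : ∑ j, A i j * β j = c' + σ ^ 2 / 2 := by
    have : ∑ j, A i j * β j = ∑ j, ((A i j - σ ^ 2 / 2) * β j + σ ^ 2 / 2 * β j) := by
      apply Finset.sum_congr rfl; intro j _; ring
    rw [this, Finset.sum_add_distrib, hc' i, ← Finset.mul_sum, hβ, mul_one]
  show ∑ j, A i j * (α j - β j) = c - c'
  have : ∑ j, A i j * (α j - β j) = ∑ j, A i j * α j - ∑ j, A i j * β j := by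
    rw [← Finset.sum_sub_distrib]
    apply Finset.sum_congr rfl; intro j _; ring
  rw [this, e1, e2]; ring
end

section
/- Let d ≥ 1 and N ≥ 1 be integers, and let m, n : {1,…,d} → ℕ with ∑_{i=1}^d m_i = ∑_{i=1}^d n_i = N. Let G_1, …, G_N be independent real random variables on a probability space, each distributed according to the Gamma distribution with shape 1/N and rate 1. Set Z = ∑_{j=1}^N G_j, M_i = ∑_{k ≤ i} m_k, N_i = ∑_{k ≤ i} n_k (with M_0 = N_0 = 0), and define X_i = (∑_{j = M_{i−1}+1}^{M_i} G_j)/Z and Y_i = (∑_{j = N_{i−1}+1}^{N_i} G_j)/Z for i = 1,…,d. Then E[ ∑_{i=1}^d |X_i − Y_i| ] ≤ ∑_{i=1}^{d−1} 2(d−i)·|m_i − n_i|/N. -/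
open MeasureTheory ProbabilityTheory Finset
open scoped ENNReal NNReal

lemma gammaMeasure_Iic_zero (a r : ℝ) : gammaMeasure a r (Set.Iic 0) = 0 := by
  rw [gammaMeasure, withDensity_apply _ measurableSet_Iic,
    Measure.restrict_congr_set Iio_ae_eq_Iic.symm]
  exact lintegral_gammaPDF_of_nonpos le_rfl

lemma nat_dist_cast (a b : ℕ) : |(a:ℝ) - b| = (Nat.dist a b : ℝ) := by
  rcases le_total a b with h | h
  · rw [Nat.dist_eq_sub_of_le h, abs_sub_comm,
      abs_of_nonneg (sub_nonneg.2 (Nat.cast_le.2 h)), Nat.cast_sub h]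
  · rw [Nat.dist_eq_sub_of_le_right h,
      abs_of_nonneg (sub_nonneg.2 (Nat.cast_le.2 h)), Nat.cast_sub h]

lemma nat_dist_sum_le {α : Type*} (s : Finset α) (f g : α → ℕ) :
    Nat.dist (∑ k ∈ s, f k) (∑ k ∈ s, g k) ≤ ∑ k ∈ s, Nat.dist (f k) (g k) := by
  classical
  induction s using Finset.induction with
  | empty => simp
  | insert _ _ h ih =>
    rw [Finset.sum_insert h, Finset.sum_insert h, Finset.sum_insert h]
    refine le_trans ?_ (Nat.add_le_add_left ih _)
    simp [Nat.dist]; omega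

section
variable {N : ℕ} {Ω : Type*} [MeasurableSpace Ω] (μ : Measure Ω) [IsProbabilityMeasure μ]
  (G : Fin N → Ω → ℝ)

omit [IsProbabilityMeasure μ] in
lemma law_eq_pi (hN : 1 ≤ N) (hGmeas : ∀ j, Measurable (G j))
    (hGindep : iIndepFun G μ)
    (hGdist : ∀ j, μ.map (G j) = gammaMeasure (1 / N) 1) :
    μ.map (fun ω (j : Fin N) => G j ω) =
      Measure.pi (fun _ : Fin N => gammaMeasure (1 / N) 1) := by
  haveI hprob : IsProbabilityMeasure (gammaMeasure (1 / (N:ℝ)) 1) :=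
    isProbabilityMeasure_gammaMeasure (by positivity) one_pos
  have hT : Measurable (fun ω (j : Fin N) => G j ω) :=
    measurable_pi_lambda _ hGmeas
  refine (Measure.pi_eq fun s hs => ?_).symm
  rw [Measure.map_apply hT (MeasurableSet.univ_pi hs)]
  have hpre : (fun ω (j : Fin N) => G j ω) ⁻¹' (Set.pi Set.univ s)
      = ⋂ j, G j ⁻¹' (s j) := by
    ext ω; simp [Set.mem_pi]
  rw [hpre, hGindep.meas_iInter (fun j => ⟨s j, hs j, rfl⟩)]
  exact Finset.prod_congr rfl fun j _ => by
    rw [← hGdist j, Measure.map_apply (hGmeas j) (hs j)]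

lemma expect_ratio (hN : 1 ≤ N) (hGmeas : ∀ j, Measurable (G j))
    (hGindep : iIndepFun G μ)
    (hGdist : ∀ j, μ.map (G j) = gammaMeasure (1 / N) 1) (j : Fin N) :
    ∫⁻ ω, ENNReal.ofReal (G j ω / ∑ k, G k ω) ∂μ = (N : ℝ≥0∞)⁻¹ := by
  have hprob : IsProbabilityMeasure (gammaMeasure (1 / (N:ℝ)) 1) :=
    isProbabilityMeasure_gammaMeasure (by positivity) one_pos
  have hT : Measurable (fun ω (j : Fin N) => G j ω) :=
    measurable_pi_lambda _ hGmeas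
  set P : Measure (Fin N → ℝ) := Measure.pi (fun _ : Fin N => gammaMeasure (1 / N) 1) with hP
  have hF : ∀ j : Fin N, Measurable (fun x : Fin N → ℝ => ENNReal.ofReal (x j / ∑ k, x k)) := by
    intro j
    exact ENNReal.measurable_ofReal.comp
      ((measurable_pi_apply j).div (Finset.measurable_sum _ fun k _ => measurable_pi_apply k))
  have hc : ∀ j : Fin N, ∫⁻ ω, ENNReal.ofReal (G j ω / ∑ k, G k ω) ∂μ
      = ∫⁻ x, ENNReal.ofReal (x j / ∑ k, x k) ∂P := by
    intro j
    rw [hP, ← law_eq_pi μ G hN hGmeas hGindep hGdist, lintegral_map (hF j) hT]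
  have hsymm : ∀ j j' : Fin N, (∫⁻ x, ENNReal.ofReal (x j / ∑ k, x k) ∂P)
      = ∫⁻ x, ENNReal.ofReal (x j' / ∑ k, x k) ∂P := by
    intro j j'
    have mp := measurePreserving_piCongrLeft (fun _ : Fin N => gammaMeasure (1 / (N:ℝ)) 1)
      (Equiv.swap j j')
    have := mp.lintegral_comp (hF j')
    rw [← hP] at this
    rw [← this]
    refine lintegral_congr fun x => ?_
    have h1 : (MeasurableEquiv.piCongrLeft (fun _ : Fin N => ℝ) (Equiv.swap j j')) x j'
        = x j := by
      have := MeasurableEquiv.piCongrLeft_apply_apply (Equiv.swap j j')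
        (β := fun _ : Fin N => ℝ) x j
      rwa [Equiv.swap_apply_left] at this
    have h2 : ∑ k, (MeasurableEquiv.piCongrLeft (fun _ : Fin N => ℝ) (Equiv.swap j j')) x k
        = ∑ k, x k := by
      rw [← Equiv.sum_comp (Equiv.swap j j')
        ((MeasurableEquiv.piCongrLeft (fun _ : Fin N => ℝ) (Equiv.swap j j')) x)]
      exact Finset.sum_congr rfl fun k _ =>
        MeasurableEquiv.piCongrLeft_apply_apply (β := fun _ : Fin N => ℝ) (Equiv.swap j j') x k
    rw [h1, h2]
  have hpos : ∀ᵐ ω ∂μ, ∀ j : Fin N, 0 < G j ω := by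
    rw [MeasureTheory.ae_all_iff]
    intro j
    have : μ {ω | ¬ 0 < G j ω} = 0 := by
      have hset : {ω | ¬ 0 < G j ω} = G j ⁻¹' (Set.Iic 0) := by
        ext ω; simp [not_lt]
      rw [hset, ← Measure.map_apply (hGmeas j) measurableSet_Iic, hGdist j,
        gammaMeasure_Iic_zero]
    exact this
  have hsum : ∑ j : Fin N, ∫⁻ ω, ENNReal.ofReal (G j ω / ∑ k, G k ω) ∂μ = 1 := by
    rw [← lintegral_finset_sum _ (f := fun j ω => ENNReal.ofReal (G j ω / ∑ k, G k ω)) (fun j _ =>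
      ((hGmeas j).div (Finset.measurable_sum _ fun k _ => hGmeas k)).ennreal_ofReal)]
    have : ∫⁻ ω, ∑ j : Fin N, ENNReal.ofReal (G j ω / ∑ k, G k ω) ∂μ = ∫⁻ _, 1 ∂μ := by
      refine lintegral_congr_ae ?_
      filter_upwards [hpos] with ω hω
      have hZpos : 0 < ∑ k, G k ω := by
        have h0 : (0:ℕ) < N := hN
        refine Finset.sum_pos (fun k _ => hω k) ⟨⟨0, h0⟩, Finset.mem_univ _⟩
      rw [← ENNReal.ofReal_sum_of_nonneg (fun j _ => div_nonneg (hω j).le hZpos.le),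
        ← Finset.sum_div, div_self hZpos.ne']
      simp
    rw [this, lintegral_one, measure_univ]
  have hNne : (N : ℝ≥0∞) ≠ 0 := by
    simp only [ne_eq, Nat.cast_eq_zero]; omega
  have hNtop : (N : ℝ≥0∞) ≠ ⊤ := ENNReal.natCast_ne_top N
  have hconst : ∀ j' : Fin N, ∫⁻ ω, ENNReal.ofReal (G j' ω / ∑ k, G k ω) ∂μ
      = ∫⁻ ω, ENNReal.ofReal (G j ω / ∑ k, G k ω) ∂μ := by
    intro j'; rw [hc j', hc j, hsymm j' j]
  have hNmul : (N : ℝ≥0∞) * ∫⁻ ω, ENNReal.ofReal (G j ω / ∑ k, G k ω) ∂μ = 1 := by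
    rw [← hsum, Finset.sum_congr rfl fun j' _ => hconst j', Finset.sum_const,
      Finset.card_univ, Fintype.card_fin, nsmul_eq_mul]
  calc ∫⁻ ω, ENNReal.ofReal (G j ω / ∑ k, G k ω) ∂μ
      = (N : ℝ≥0∞)⁻¹ * ((N : ℝ≥0∞) * ∫⁻ ω, ENNReal.ofReal (G j ω / ∑ k, G k ω) ∂μ) := by
        rw [← mul_assoc, ENNReal.inv_mul_cancel hNne hNtop, one_mul]
    _ = (N : ℝ≥0∞)⁻¹ := by rw [hNmul, mul_one]

end

/-- Coupling bound for grouped sums of i.i.d. `Gamma(1/N, 1)` random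
variables: with `X i` and `Y i` the normalized block sums of `G` over the blocks determined
by the partial sums `SM`, `SN` of `m` and `n` (both summing to `N`), one has
`E [∑ i, |X i − Y i|] ≤ ∑_{i=1}^{d-1} 2 (d - i) |m i − n i| / N`. -/
theorem gamma_block_coupling_total {d N : ℕ} (hd : 1 ≤ d) (hN : 1 ≤ N)
    (m n : Fin d → ℕ) (hm : ∑ i, m i = N) (hn : ∑ i, n i = N)
    {Ω : Type*} [MeasurableSpace Ω] (μ : Measure Ω) [IsProbabilityMeasure μ]
    (G : Fin N → Ω → ℝ) (hGmeas : ∀ j, Measurable (G j))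
    (hGindep : iIndepFun G μ)
    (hGdist : ∀ j, μ.map (G j) = gammaMeasure (1 / N) 1)
    (Z : Ω → ℝ) (hZ : ∀ ω, Z ω = ∑ j, G j ω)
    (SM SN : ℕ → ℕ)
    (hSM : ∀ i : ℕ, SM i = ∑ k ∈ univ.filter (fun k : Fin d => (k : ℕ) < i), m k)
    (hSN : ∀ i : ℕ, SN i = ∑ k ∈ univ.filter (fun k : Fin d => (k : ℕ) < i), n k)
    (X Y : Fin d → Ω → ℝ)
    (hX : ∀ (i : Fin d) (ω : Ω), X i ω =
      (∑ j ∈ univ.filter (fun j : Fin N => SM (i : ℕ) ≤ (j : ℕ) ∧ (j : ℕ) < SM ((i : ℕ) + 1)),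
        G j ω) / Z ω)
    (hY : ∀ (i : Fin d) (ω : Ω), Y i ω =
      (∑ j ∈ univ.filter (fun j : Fin N => SN (i : ℕ) ≤ (j : ℕ) ∧ (j : ℕ) < SN ((i : ℕ) + 1)),
        G j ω) / Z ω) :
    ∫⁻ ω, ENNReal.ofReal (∑ i, |X i ω - Y i ω|) ∂μ ≤
      ENNReal.ofReal (∑ i ∈ univ.filter (fun i : Fin d => (i : ℕ) + 1 < d),
        2 * ((d : ℝ) - ((i : ℕ) + 1)) * |(m i : ℝ) - (n i : ℝ)| / N) := by
  classical
  have hZmeas : Measurable Z := by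
    have : Z = fun ω => ∑ j, G j ω := funext hZ
    rw [this]; exact Finset.measurable_sum _ fun j _ => hGmeas j
  -- the elementary integrals
  have hc : ∀ j : Fin N, ∫⁻ ω, ENNReal.ofReal (G j ω / Z ω) ∂μ = (N : ℝ≥0∞)⁻¹ := by
    intro j
    rw [lintegral_congr fun ω => by rw [hZ ω]]
    exact expect_ratio μ G hN hGmeas hGindep hGdist j
  -- positivity a.e.
  have hpos : ∀ᵐ ω ∂μ, ∀ j : Fin N, 0 < G j ω := by
    rw [MeasureTheory.ae_all_iff]
    intro j
    have : μ {ω | ¬ 0 < G j ω} = 0 := by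
      have hset : {ω | ¬ 0 < G j ω} = G j ⁻¹' (Set.Iic 0) := by
        ext ω; simp [not_lt]
      rw [hset, ← Measure.map_apply (hGmeas j) measurableSet_Iic, hGdist j,
        gammaMeasure_Iic_zero]
    exact this
  -- block Finsets
  set A : Fin d → Finset (Fin N) := fun i =>
    univ.filter (fun j : Fin N => SM (i : ℕ) ≤ (j : ℕ) ∧ (j : ℕ) < SM ((i : ℕ) + 1)) with hA
  set B : Fin d → Finset (Fin N) := fun i =>
    univ.filter (fun j : Fin N => SN (i : ℕ) ≤ (j : ℕ) ∧ (j : ℕ) < SN ((i : ℕ) + 1)) with hB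
  set K : ℕ → Finset (Fin N) := fun i =>
    univ.filter (fun j : Fin N =>
      min (SM i) (SN i) ≤ (j : ℕ) ∧ (j : ℕ) < max (SM i) (SN i)) with hK
  -- card bounds
  have hKcard : ∀ i : ℕ, (K i).card ≤ Nat.dist (SM i) (SN i) := by
    intro i
    have h1 : (K i).card ≤ (Finset.Ico (min (SM i) (SN i)) (max (SM i) (SN i))).card := by
      refine Finset.card_le_card_of_injOn (fun j => (j : ℕ)) ?_ (Fin.val_injective.injOn)
      intro j hj
      rw [hK] at hj
      simp only [Finset.mem_filter, Finset.mem_univ, true_and] at hj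
      rw [Finset.mem_coe, Finset.mem_Ico]; simpa using hj
    rwa [Nat.card_Ico, ← Nat.dist_eq_max_sub_min] at h1
  -- pointwise bound
  have hptwise : ∀ᵐ ω ∂μ, ENNReal.ofReal (∑ i, |X i ω - Y i ω|) ≤
      ∑ i : Fin d, ((∑ j ∈ K (i : ℕ), ENNReal.ofReal (G j ω / Z ω))
        + ∑ j ∈ K ((i : ℕ) + 1), ENNReal.ofReal (G j ω / Z ω)) := by
    filter_upwards [hpos] with ω hω
    have hZpos : 0 < Z ω := by
      rw [hZ]
      exact Finset.sum_pos (fun k _ => hω k) ⟨⟨0, hN⟩, Finset.mem_univ _⟩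
    have hreal : ∑ i, |X i ω - Y i ω| ≤
        ∑ i : Fin d, ((∑ j ∈ K (i : ℕ), G j ω / Z ω) + ∑ j ∈ K ((i : ℕ) + 1), G j ω / Z ω) := by
      refine Finset.sum_le_sum fun i _ => ?_
      rw [hX, hY, div_sub_div_same, abs_div, abs_of_pos hZpos]
      rw [← Finset.sum_div, ← Finset.sum_div, ← add_div, div_le_div_iff_of_pos_right hZpos]
      -- |∑_{A i} G - ∑_{B i} G| ≤ ∑_{K i} G + ∑_{K (i+1)} G
      have hsplit : (∑ j ∈ A i, G j ω) - ∑ j ∈ B i, G j ω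
          = (∑ j ∈ A i \ B i, G j ω) - ∑ j ∈ B i \ A i, G j ω := by
        rw [← Finset.sum_inter_add_sum_sdiff (A i) (B i) (fun j => G j ω),
          ← Finset.sum_inter_add_sum_sdiff (B i) (A i) (fun j => G j ω),
          Finset.inter_comm]
        ring
      rw [hA, hB] at hsplit
      rw [hsplit]
      have habs : |(∑ j ∈ A i \ B i, G j ω) - ∑ j ∈ B i \ A i, G j ω|
          ≤ (∑ j ∈ A i \ B i, G j ω) + ∑ j ∈ B i \ A i, G j ω := by
        refine (abs_sub _ _).trans ?_
        rw [abs_of_nonneg (Finset.sum_nonneg fun j _ => (hω j).le),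
          abs_of_nonneg (Finset.sum_nonneg fun j _ => (hω j).le)]
      refine habs.trans ?_
      rw [← Finset.sum_union (disjoint_sdiff_sdiff)]
      have hsub : (A i \ B i) ∪ (B i \ A i) ⊆ K (i : ℕ) ∪ K ((i : ℕ) + 1) := by
        intro x hx
        rw [hA, hB] at hx
        rw [hK]
        simp only [Finset.mem_union, Finset.mem_sdiff, Finset.mem_filter, Finset.mem_univ,
          true_and, not_and, not_lt] at hx ⊢
        omega
      refine le_trans (Finset.sum_le_sum_of_subset_of_nonneg hsub fun j _ _ => (hω j).le) ?_
      calc ∑ j ∈ K (i : ℕ) ∪ K ((i : ℕ) + 1), G j ω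
          ≤ (∑ j ∈ K (i : ℕ) ∪ K ((i : ℕ) + 1), G j ω)
            + ∑ j ∈ K (i : ℕ) ∩ K ((i : ℕ) + 1), G j ω :=
            le_add_of_nonneg_right (Finset.sum_nonneg fun j _ => (hω j).le)
        _ = (∑ j ∈ K (i : ℕ), G j ω) + ∑ j ∈ K ((i : ℕ) + 1), G j ω :=
            Finset.sum_union_inter
    calc ENNReal.ofReal (∑ i, |X i ω - Y i ω|)
        ≤ ENNReal.ofReal (∑ i : Fin d, ((∑ j ∈ K (i : ℕ), G j ω / Z ω)
            + ∑ j ∈ K ((i : ℕ) + 1), G j ω / Z ω)) := ENNReal.ofReal_le_ofReal hreal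
      _ = ∑ i : Fin d, ((∑ j ∈ K (i : ℕ), ENNReal.ofReal (G j ω / Z ω))
            + ∑ j ∈ K ((i : ℕ) + 1), ENNReal.ofReal (G j ω / Z ω)) := by
          have hnn : ∀ (s : Finset (Fin N)), 0 ≤ ∑ j ∈ s, G j ω / Z ω :=
            fun s => Finset.sum_nonneg fun j _ => div_nonneg (hω j).le hZpos.le
          rw [ENNReal.ofReal_sum_of_nonneg (fun i _ => add_nonneg (hnn _) (hnn _))]
          refine Finset.sum_congr rfl fun i _ => ?_
          rw [ENNReal.ofReal_add (hnn _) (hnn _),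
            ENNReal.ofReal_sum_of_nonneg (fun j _ => div_nonneg (hω j).le hZpos.le),
            ENNReal.ofReal_sum_of_nonneg (fun j _ => div_nonneg (hω j).le hZpos.le)]
  -- integrate
  have hmeas1 : ∀ j : Fin N, Measurable fun ω => ENNReal.ofReal (G j ω / Z ω) :=
    fun j => ((hGmeas j).div hZmeas).ennreal_ofReal
  have hstep : ∫⁻ ω, ENNReal.ofReal (∑ i, |X i ω - Y i ω|) ∂μ ≤
      ∑ i : Fin d, (((K (i : ℕ)).card : ℝ≥0∞) * (N : ℝ≥0∞)⁻¹
        + ((K ((i : ℕ) + 1)).card : ℝ≥0∞) * (N : ℝ≥0∞)⁻¹) := by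
    refine le_trans (lintegral_mono_ae hptwise) ?_
    rw [lintegral_finset_sum _ (f := fun (i : Fin d) ω =>
          (∑ j ∈ K (i : ℕ), ENNReal.ofReal (G j ω / Z ω))
            + ∑ j ∈ K ((i : ℕ) + 1), ENNReal.ofReal (G j ω / Z ω)) (fun i _ =>
      ((Finset.measurable_sum _ fun j _ => hmeas1 j).add
        (Finset.measurable_sum _ fun j _ => hmeas1 j)))]
    refine le_of_eq (Finset.sum_congr rfl fun i _ => ?_)
    rw [lintegral_add_left (Finset.measurable_sum _ fun j _ => hmeas1 j),
      lintegral_finset_sum _ (fun j _ => hmeas1 j),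
      lintegral_finset_sum _ (fun j _ => hmeas1 j)]
    simp only [hc, Finset.sum_const, nsmul_eq_mul]
  refine hstep.trans ?_
  -- combinatorial endgame
  set Δ : ℕ → ℕ := fun i => Nat.dist (SM i) (SN i) with hΔ
  set δf : Fin d → ℕ := fun k => Nat.dist (m k) (n k) with hδf
  set W : ℕ → ℕ := fun i => ∑ k ∈ univ.filter (fun k : Fin d => (k : ℕ) < i), δf k with hW
  set K' : ℕ := ∑ i ∈ univ.filter (fun i : Fin d => (i : ℕ) + 1 < d),
    2 * (d - ((i : ℕ) + 1)) * δf i with hK'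
  have hNpos : (0:ℝ) < N := by exact_mod_cast hN
  -- step A : bound by Δ
  have hA1 : ∑ i : Fin d, (((K (i : ℕ)).card : ℝ≥0∞) * (N : ℝ≥0∞)⁻¹
        + ((K ((i : ℕ) + 1)).card : ℝ≥0∞) * (N : ℝ≥0∞)⁻¹)
      ≤ ((∑ i ∈ range d, (Δ i + Δ (i + 1)) : ℕ) : ℝ≥0∞) * (N : ℝ≥0∞)⁻¹ := by
    rw [Nat.cast_sum, Finset.sum_mul, ← Fin.sum_univ_eq_sum_range
      (fun i => ((Δ i + Δ (i + 1) : ℕ) : ℝ≥0∞) * (N : ℝ≥0∞)⁻¹) d]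
    refine Finset.sum_le_sum fun i _ => ?_
    rw [Nat.cast_add, add_mul]
    exact add_le_add
      (mul_le_mul_left (Nat.cast_le.2 (hKcard (i : ℕ))) _)
      (mul_le_mul_left (Nat.cast_le.2 (hKcard ((i : ℕ) + 1))) _)
  refine hA1.trans ?_
  -- step B : nat inequality
  have hΔle : ∀ i : ℕ, Δ i ≤ W i := by
    intro i
    simp only [hΔ, hW]
    rw [hSM i, hSN i]
    exact nat_dist_sum_le _ _ _
  have hΔd : Δ d = 0 := by
    have hfil : univ.filter (fun k : Fin d => (k : ℕ) < d) = univ :=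
      Finset.filter_true_of_mem fun k _ => k.isLt
    simp only [hΔ]
    rw [hSM d, hSN d, hfil, hm, hn, Nat.dist_self]
  have hW0 : W 0 = 0 := by
    simp [hW]
  have hWsum : ∑ i ∈ range d, W i = ∑ k : Fin d, (d - ((k : ℕ) + 1)) * δf k := by
    have h1 : ∀ i, W i = ∑ k : Fin d, if (k : ℕ) < i then δf k else 0 := by
      intro i; simp only [hW]; rw [Finset.sum_filter]
    simp_rw [h1]
    rw [Finset.sum_comm]
    refine Finset.sum_congr rfl fun k _ => ?_
    rw [← Finset.sum_filter]
    have h2 : (range d).filter (fun i => (k : ℕ) < i) = Finset.Ico ((k : ℕ) + 1) d := by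
      ext x; simp only [Finset.mem_filter, Finset.mem_range, Finset.mem_Ico]; omega
    rw [h2, Finset.sum_const, Nat.card_Ico, smul_eq_mul]
  have hnat : ∑ i ∈ range d, (Δ i + Δ (i + 1)) ≤ K' := by
    rw [Finset.sum_add_distrib]
    obtain ⟨e, rfl⟩ : ∃ e, d = e + 1 := ⟨d - 1, by omega⟩
    have hS1 : ∑ i ∈ range (e + 1), Δ i ≤ ∑ i ∈ range (e + 1), W i :=
      Finset.sum_le_sum fun i _ => hΔle i
    have hS2 : ∑ i ∈ range (e + 1), Δ (i + 1) ≤ ∑ i ∈ range (e + 1), W i := by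
      rw [Finset.sum_range_succ, hΔd, add_zero, Finset.sum_range_succ' W, hW0, add_zero]
      exact Finset.sum_le_sum fun i _ => hΔle (i + 1)
    refine le_trans (Nat.add_le_add hS1 hS2) ?_
    rw [← two_mul, hWsum, Finset.mul_sum, hK']
    rw [Finset.sum_filter_of_ne]
    · exact le_of_eq (Finset.sum_congr rfl fun k _ => by ring)
    · intro x _ hx
      by_contra hcon
      apply hx
      have : e + 1 - ((x : ℕ) + 1) = 0 := by omega
      rw [this, Nat.mul_zero, Nat.zero_mul]
  refine le_trans (mul_le_mul_left (Nat.cast_le.2 hnat) _) (le_of_eq ?_)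
  -- step C : identify RHS
  have hRHSeq : ∑ i ∈ univ.filter (fun i : Fin d => (i : ℕ) + 1 < d),
      2 * ((d : ℝ) - ((i : ℕ) + 1)) * |(m i : ℝ) - (n i : ℝ)| / N
      = (K' : ℝ) / N := by
    rw [hK', Nat.cast_sum, Finset.sum_div]
    refine Finset.sum_congr rfl fun i hi => ?_
    rw [Finset.mem_filter] at hi
    have hle : (i : ℕ) + 1 ≤ d := le_of_lt hi.2
    rw [nat_dist_cast (m i) (n i), hδf]
    push_cast [Nat.cast_sub hle]
    ring
  rw [hRHSeq, div_eq_mul_inv, ENNReal.ofReal_mul (Nat.cast_nonneg K'),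
    ENNReal.ofReal_inv_of_pos hNpos, ENNReal.ofReal_natCast, ENNReal.ofReal_natCast]
end

section
/- Let E be a compact metric space, U ⊆ E an open set, and P a Markov kernel on E such that (P x)(E \ U) = 0 for every x ∈ U. Let H : E → [0,∞] be continuous (as a map into the extended nonnegative reals) with H(x) < ∞ if and only if x ∈ U, and suppose there are constants α ∈ (0,1) and C ≥ 0 such that ∫⁻ H d(P x) ≤ α·H(x) + C for every x ∈ U. Then for every x ∈ U, every cluster point ν (in the topology of weak convergence of probability measures on E) of the sequence (δ_x · Pⁿ)_{n ≥ 0} satisfies ν(E \ U) = 0. -/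
open MeasureTheory ProbabilityTheory Filter
open scoped ENNReal

/-- Let `E` be a compact metric space, `U ⊆ E` open, and `P` a Markov kernel
with `(P x)(Uᶜ) = 0` for `x ∈ U`. Let `H : E → [0,∞]` be continuous with `H x < ∞ ↔ x ∈ U`,
and suppose `∫⁻ H d(P x) ≤ α H x + C` on `U` for constants `α ∈ (0,1)`, `C ≥ 0`. Then for
every `x ∈ U`, every weak cluster point `ν` of the sequence of laws `(δ_x Pⁿ)ₙ` satisfies
`ν(Uᶜ) = 0`. -/
theorem cluster_points_do_not_charge_boundary
    {E : Type*} [MeasurableSpace E] [MetricSpace E] [CompactSpace E] [BorelSpace E]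
    (U : Set E) (hU : IsOpen U)
    (P : Kernel E E) [IsMarkovKernel P]
    (hPU : ∀ x ∈ U, (P x) Uᶜ = 0)
    (H : E → ℝ≥0∞) (hHcont : Continuous H) (hHfin : ∀ x : E, H x < ⊤ ↔ x ∈ U)
    (α C : ℝ) (hα : α ∈ Set.Ioo (0 : ℝ) 1) (hC : 0 ≤ C)
    (hdrift : ∀ x ∈ U, ∫⁻ y, H y ∂(P x) ≤ ENNReal.ofReal α * H x + ENNReal.ofReal C)
    (x : E) (hx : x ∈ U)
    (μseq : ℕ → ProbabilityMeasure E)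
    (hμ0 : (μseq 0 : Measure E) = Measure.dirac x)
    (hμsucc : ∀ n : ℕ, (μseq (n + 1) : Measure E) = (μseq n : Measure E).bind (fun y => P y))
    (ν : ProbabilityMeasure E) (hν : MapClusterPt ν atTop μseq) :
    (ν : Measure E) Uᶜ = 0 := by
  have hUc : MeasurableSet Uᶜ := hU.measurableSet.compl
  have hPm : Measurable fun y : E => P y := P.measurable
  have hHm : Measurable H := hHcont.measurable
  have h1α : (0:ℝ) < 1 - α := by linarith [hα.2]
  -- Step 1: μ_n does not charge Uᶜ
  have hnull : ∀ n, (μseq n : Measure E) Uᶜ = 0 := by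
    intro n
    induction n with
    | zero =>
      rw [hμ0, Measure.dirac_apply' _ hUc]
      simp [hx]
    | succ n ih =>
      rw [hμsucc, Measure.bind_apply hUc hPm.aemeasurable]
      have hae : ∀ᵐ y ∂(μseq n : Measure E), y ∈ U := by
        rw [ae_iff]
        exact ih
      rw [lintegral_eq_zero_iff (P.measurable_coe hUc)]
      filter_upwards [hae] with y hy using hPU y hy
  -- Step 2: uniform bound on ∫ H dμ_n
  set B : ℝ≥0∞ := H x + ENNReal.ofReal (C / (1 - α)) with hBdef
  have hBlt : B < ⊤ := by
    rw [hBdef]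
    exact ENNReal.add_lt_top.2 ⟨(hHfin x).2 hx, ENNReal.ofReal_lt_top⟩
  have hkey : ENNReal.ofReal α * B + ENNReal.ofReal C ≤ B := by
    rw [hBdef, mul_add]
    have h1 : ENNReal.ofReal α * H x ≤ H x := by
      apply mul_le_of_le_one_left zero_le
      simpa using ENNReal.ofReal_le_one.2 hα.2.le
    have h2 : ENNReal.ofReal α * ENNReal.ofReal (C / (1 - α)) + ENNReal.ofReal C
        = ENNReal.ofReal (C / (1 - α)) := by
      rw [← ENNReal.ofReal_mul hα.1.le, ← ENNReal.ofReal_add (mul_nonneg hα.1.le (div_nonneg hC h1α.le)) hC]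
      congr 1
      field_simp
      ring
    calc ENNReal.ofReal α * H x + ENNReal.ofReal α * ENNReal.ofReal (C / (1 - α))
          + ENNReal.ofReal C
        ≤ H x + (ENNReal.ofReal α * ENNReal.ofReal (C / (1 - α)) + ENNReal.ofReal C) := by
          rw [add_assoc]; exact add_le_add h1 le_rfl
      _ = H x + ENNReal.ofReal (C / (1 - α)) := by rw [h2]
  have hB : ∀ n, ∫⁻ y, H y ∂(μseq n : Measure E) ≤ B := by
    intro n
    induction n with
    | zero =>
      rw [hμ0, lintegral_dirac' _ hHm]
      exact le_add_right le_rfl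
    | succ n ih =>
      rw [hμsucc, Measure.lintegral_bind hPm.aemeasurable hHm.aemeasurable]
      have hae : ∀ᵐ y ∂(μseq n : Measure E), y ∈ U := by
        rw [ae_iff]; exact hnull n
      calc ∫⁻ y, ∫⁻ z, H z ∂(P y) ∂(μseq n : Measure E)
          ≤ ∫⁻ y, (ENNReal.ofReal α * H y + ENNReal.ofReal C) ∂(μseq n : Measure E) := by
            apply lintegral_mono_ae
            filter_upwards [hae] with y hy using hdrift y hy
        _ = ENNReal.ofReal α * ∫⁻ y, H y ∂(μseq n : Measure E) + ENNReal.ofReal C := by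
            rw [lintegral_add_right _ measurable_const, lintegral_const_mul _ hHm,
              lintegral_const, measure_univ, mul_one]
        _ ≤ ENNReal.ofReal α * B + ENNReal.ofReal C := by
            gcongr
        _ ≤ B := hkey
  -- Step 3: extract a convergent subsequence
  obtain ⟨ψ, -, hψ⟩ := TopologicalSpace.FirstCountableTopology.tendsto_subseq hν
  -- Step 4: for every natural M, ν Uᶜ ≤ B / M
  have hbound : ∀ M : ℕ, (ν : Measure E) Uᶜ ≤ B / (M + 1 : ℕ) := by
    intro M
    set G : Set E := H ⁻¹' Set.Ioi ((M + 1 : ℕ) : ℝ≥0∞) with hGdef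
    have hGopen : IsOpen G := isOpen_Ioi.preimage hHcont
    have hsub : Uᶜ ⊆ G := by
      intro y hy
      have : H y = ⊤ := by
        by_contra h
        exact hy ((hHfin y).1 (lt_top_iff_ne_top.2 h))
      simp only [hGdef, Set.mem_preimage, Set.mem_Ioi, this]
      exact ENNReal.natCast_lt_top (M + 1)
    have hμG : ∀ n, (μseq n : Measure E) G ≤ B / (M + 1 : ℕ) := by
      intro n
      calc (μseq n : Measure E) G
          ≤ (μseq n : Measure E) {y | ((M + 1 : ℕ) : ℝ≥0∞) ≤ H y} :=
            measure_mono (by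
              intro y hy
              simp only [hGdef, Set.mem_preimage, Set.mem_Ioi] at hy
              exact Set.mem_setOf_eq ▸ hy.le)
        _ ≤ (∫⁻ y, H y ∂(μseq n : Measure E)) / (M + 1 : ℕ) :=
            meas_ge_le_lintegral_div hHm.aemeasurable
              (by exact_mod_cast (Nat.succ_ne_zero M)) (ENNReal.natCast_ne_top (M + 1))
        _ ≤ B / (M + 1 : ℕ) := by gcongr; exact hB n
    calc (ν : Measure E) Uᶜ ≤ (ν : Measure E) G := measure_mono hsub
      _ ≤ atTop.liminf fun k => ((μseq ∘ ψ) k : Measure E) G :=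
          ProbabilityMeasure.le_liminf_measure_open_of_tendsto hψ hGopen
      _ ≤ B / (M + 1 : ℕ) := by
          apply Filter.liminf_le_of_frequently_le'
          exact Filter.Frequently.of_forall fun k => hμG (ψ k)
  -- Conclude
  by_contra hne
  have hν1 : (ν : Measure E) Uᶜ ≠ ⊤ := (measure_lt_top _ _).ne
  have hdiv : B / (ν : Measure E) Uᶜ ≠ ⊤ :=
    (ENNReal.div_lt_top hBlt.ne hne).ne
  obtain ⟨M, hM⟩ := ENNReal.exists_nat_gt hdiv
  have hM' : B / (ν : Measure E) Uᶜ < ((M + 1 : ℕ) : ℝ≥0∞) :=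
    hM.trans_le (by exact_mod_cast Nat.le_succ M)
  have h1 : B < ((M + 1 : ℕ) : ℝ≥0∞) * (ν : Measure E) Uᶜ := by
    rwa [ENNReal.div_lt_iff (Or.inl hne) (Or.inl hν1)] at hM'
  have h2 : ((M + 1 : ℕ) : ℝ≥0∞) * (ν : Measure E) Uᶜ ≤ B := by
    rw [mul_comm]
    exact ENNReal.mul_le_of_le_div (hbound M)
  exact absurd (h1.trans_le h2) (lt_irrefl _)
end

section
/- Let (E, ℰ) be a measurable space, P a Markov kernel on E, U ∈ ℰ with (P x)(E \ U) = 0 for every x ∈ U, and H : E → [0,∞] a measurable function with H(x) < ∞ for every x ∈ U. Suppose there are constants α ∈ (0,1) and C ≥ 0 such that ∫⁻ H d(P x) ≤ α·H(x) + C for every x ∈ U. If μ is a probability measure invariant for P with μ(E \ U) = 0, then ∫⁻ H dμ ≤ C/(1−α). -/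
open MeasureTheory ProbabilityTheory
open scoped ENNReal

noncomputable def lyapIter {E : Type*} [MeasurableSpace E] (P : Kernel E E)
    (g : E → ℝ≥0∞) : ℕ → E → ℝ≥0∞
  | 0 => g
  | n + 1 => fun x => ∫⁻ y, lyapIter P g n y ∂(P x)

/-- Foster–Lyapunov drift condition: if `H : E → [0,∞]` is measurable,
finite on `U`, the kernel `P` does not leave `U`, and `∫⁻ H d(P x) ≤ α H x + C` on `U`
with `α ∈ (0,1)`, `C ≥ 0`, then every invariant probability measure `μ` supported in `U`
satisfies `∫⁻ H dμ ≤ C / (1 - α)`. -/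
theorem invariant_measure_lyapunov_integrable
    {E : Type*} [MeasurableSpace E] (P : Kernel E E) [IsMarkovKernel P]
    (U : Set E) (hU : MeasurableSet U) (hPU : ∀ x ∈ U, (P x) Uᶜ = 0)
    (H : E → ℝ≥0∞) (hH : Measurable H) (hHfin : ∀ x ∈ U, H x < ⊤)
    (α C : ℝ) (hα : α ∈ Set.Ioo (0 : ℝ) 1) (hC : 0 ≤ C)
    (hdrift : ∀ x ∈ U, ∫⁻ y, H y ∂(P x) ≤ ENNReal.ofReal α * H x + ENNReal.ofReal C)
    (μ : Measure E) [IsProbabilityMeasure μ]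
    (hinv : μ.bind (fun x => P x) = μ) (hμU : μ Uᶜ = 0) :
    ∫⁻ x, H x ∂μ ≤ ENNReal.ofReal (C / (1 - α)) := by
  obtain ⟨hα0, hα1⟩ := hα
  set a := ENNReal.ofReal α with ha
  set c := ENNReal.ofReal C with hc
  have ha1 : a < 1 := by
    rw [ha, ← ENNReal.ofReal_one]
    exact ENNReal.ofReal_lt_ofReal_iff_of_nonneg (le_of_lt hα0) |>.mpr hα1
  set D : ℝ≥0∞ := (1 - a)⁻¹ * c with hD
  have hDeq : D = ENNReal.ofReal (C / (1 - α)) := by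
    rw [ENNReal.ofReal_div_of_pos (by linarith), hD, hc, ha,
      ENNReal.ofReal_sub 1 (le_of_lt hα0), ENNReal.ofReal_one, div_eq_mul_inv, mul_comm]
  have haeU : ∀ᵐ x ∂μ, x ∈ U := by
    rw [MeasureTheory.ae_iff]
    exact hμU
  -- key bound for truncations
  have key : ∀ N : ℕ, ∫⁻ x, min (H x) N ∂μ ≤ D := by
    intro N
    set f : ℕ → E → ℝ≥0∞ := lyapIter P (fun x => min (H x) N) with hf
    have hmeas : ∀ n, Measurable (f n) := by
      intro n
      induction n with
      | zero => exact hH.min measurable_const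
      | succ n ih =>
        exact Measurable.lintegral_kernel_prod_right' (ih.comp measurable_snd)
    have hleN : ∀ n x, f n x ≤ N := by
      intro n
      induction n with
      | zero => exact fun x => min_le_right _ _
      | succ n ih =>
        intro x
        calc ∫⁻ y, f n y ∂(P x) ≤ ∫⁻ _y, (N : ℝ≥0∞) ∂(P x) := lintegral_mono ih
          _ = N := by simp
    have hboundU : ∀ n, ∀ x ∈ U,
        f n x ≤ a ^ n * H x + (∑ k ∈ Finset.range n, a ^ k) * c := by
      intro n
      induction n with
      | zero =>
          intro x _
          show min (H x) N ≤ _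
          simp only [pow_zero, one_mul, Finset.range_zero, Finset.sum_empty, zero_mul, add_zero]
          exact min_le_left _ _
      | succ n ih =>
        intro x hx
        have hae : ∀ᵐ y ∂(P x), y ∈ U := by
          rw [MeasureTheory.ae_iff]
          exact hPU x hx
        calc f (n + 1) x = ∫⁻ y, f n y ∂(P x) := rfl
          _ ≤ ∫⁻ y, a ^ n * H y + (∑ k ∈ Finset.range n, a ^ k) * c ∂(P x) := by
              refine lintegral_mono_ae ?_
              filter_upwards [hae] with y hy using ih y hy
          _ = a ^ n * ∫⁻ y, H y ∂(P x) + (∑ k ∈ Finset.range n, a ^ k) * c := by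
              rw [lintegral_add_right _ measurable_const, lintegral_const_mul _ hH,
                lintegral_const, measure_univ, mul_one]
          _ ≤ a ^ n * (a * H x + c) + (∑ k ∈ Finset.range n, a ^ k) * c := by
              gcongr
              exact hdrift x hx
          _ = a ^ (n + 1) * H x + (∑ k ∈ Finset.range (n + 1), a ^ k) * c := by
              rw [Finset.sum_range_succ]
              ring
    have hboundU' : ∀ n, ∀ x ∈ U, f n x ≤ min (a ^ n * H x) N + D := by
      intro n x hx
      rcases le_total (a ^ n * H x) (N : ℝ≥0∞) with h | h
      · rw [min_eq_left h]
        refine (hboundU n x hx).trans ?_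
        gcongr
        rw [hD]
        gcongr
        exact le_trans (ENNReal.sum_le_tsum _) (le_of_eq (ENNReal.tsum_geometric a))
      · rw [min_eq_right h]
        exact le_trans (hleN n x) le_self_add
    have hinvint : ∀ n, ∫⁻ x, f n x ∂μ = ∫⁻ x, min (H x) N ∂μ := by
      intro n
      induction n with
      | zero => rfl
      | succ n ih =>
        calc ∫⁻ x, f (n + 1) x ∂μ = ∫⁻ x, ∫⁻ y, f n y ∂(P x) ∂μ := rfl
          _ = ∫⁻ y, f n y ∂(μ.bind fun x => P x) :=
              (Measure.lintegral_bind P.measurable.aemeasurable (hmeas n).aemeasurable).symm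
          _ = ∫⁻ y, f n y ∂μ := by rw [hinv]
          _ = ∫⁻ x, min (H x) N ∂μ := ih
    have hstep : ∀ n, ∫⁻ x, min (H x) N ∂μ ≤ ∫⁻ x, min (a ^ n * H x) N ∂μ + D := by
      intro n
      rw [← hinvint n]
      calc ∫⁻ x, f n x ∂μ ≤ ∫⁻ x, min (a ^ n * H x) N + D ∂μ := by
            refine lintegral_mono_ae ?_
            filter_upwards [haeU] with x hx using hboundU' n x hx
        _ = ∫⁻ x, min (a ^ n * H x) N ∂μ + D := by
            rw [lintegral_add_right _ measurable_const, lintegral_const, measure_univ, mul_one]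
    -- dominated convergence: the first term tends to 0
    have hdom : Filter.Tendsto (fun n => ∫⁻ x, min (a ^ n * H x) N ∂μ)
        Filter.atTop (nhds (∫⁻ _x, (0 : ℝ≥0∞) ∂μ)) := by
      refine tendsto_lintegral_of_dominated_convergence (fun _ => (N : ℝ≥0∞))
        (fun n => ((hH.const_mul _).min measurable_const)) ?_ ?_ ?_
      · exact fun n => Filter.Eventually.of_forall fun x => min_le_right _ _
      · simp [ENNReal.natCast_ne_top]
      · filter_upwards [haeU] with x hx
        have h1 : Filter.Tendsto (fun n => a ^ n * H x) Filter.atTop (nhds 0) := by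
          have := ENNReal.Tendsto.mul_const
            (ENNReal.tendsto_pow_atTop_nhds_zero_of_lt_one ha1)
            (Or.inr (hHfin x hx).ne)
          simpa using this
        exact tendsto_of_tendsto_of_tendsto_of_le_of_le tendsto_const_nhds h1
          (fun n => zero_le) (fun n => min_le_left _ _)
    have hdom0 : Filter.Tendsto (fun n => ∫⁻ x, min (a ^ n * H x) N ∂μ)
        Filter.atTop (nhds 0) := by simpa using hdom
    have hlim := hdom0.add (tendsto_const_nhds (x := D) (f := Filter.atTop (α := ℕ)))
    rw [zero_add] at hlim
    exact ge_of_tendsto hlim (Filter.Eventually.of_forall hstep)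
  -- pass to the limit N → ∞
  have hsup : ∀ x, ⨆ N : ℕ, min (H x) N = H x := by
    intro x
    refine le_antisymm (iSup_le fun N => min_le_left _ _) ?_
    rcases eq_or_ne (H x) ⊤ with h | h
    · rw [h]
      calc (⊤ : ℝ≥0∞) = ⨆ N : ℕ, (N : ℝ≥0∞) := (ENNReal.iSup_natCast).symm
        _ ≤ ⨆ N : ℕ, min (⊤ : ℝ≥0∞) N := by gcongr with N; simp
    · obtain ⟨N, hN⟩ := ENNReal.exists_nat_gt h
      calc H x = min (H x) N := (min_eq_left hN.le).symm
        _ ≤ ⨆ N : ℕ, min (H x) N := le_iSup (fun N : ℕ => min (H x) (N : ℝ≥0∞)) N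
  calc ∫⁻ x, H x ∂μ = ∫⁻ x, ⨆ N : ℕ, min (H x) N ∂μ := by
        apply lintegral_congr
        intro x
        exact (hsup x).symm
    _ = ⨆ N : ℕ, ∫⁻ x, min (H x) N ∂μ := by
        refine lintegral_iSup (fun N => hH.min measurable_const) ?_
        intro i j hij x
        exact min_le_min le_rfl (by exact_mod_cast Nat.cast_le.mpr hij)
    _ ≤ D := iSup_le key
    _ = ENNReal.ofReal (C / (1 - α)) := hDeq
end
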